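/- arXiv:2303.11768 — 2 statements merged into one kernel-verified Lean document; each statement's English description precedes it below -/
import Mathlib

section
/- Let X be a non-compact Tychonoff space and let ℱ ⊆ C(X) be a set of continuous real-valued functions with 𝟎 ∈ cl(ℱ) ∖ ℱ in C_k(X). Then for every n ∈ ℕ the family 𝕌(ℱ,n) = {U : U a nonempty proper open subset of X such that there exist a nonempty compact K ⊆ X and f ∈ ℱ with K ⊆ U ⊆ f⁻¹((−2⁻ⁿ, 2⁻ⁿ))} is a k-cover of X. -/
open Set TopologicalSpace

universe u

/-- A non-trivial open cover: a family of nonempty proper open sets covering `X`. -/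
def NTOpenCover (X : Type u) [TopologicalSpace X] (𝒰 : Set (Set X)) : Prop :=
  (∀ U ∈ 𝒰, IsOpen U ∧ U.Nonempty ∧ U ≠ Set.univ) ∧ ⋃₀ 𝒰 = Set.univ

/-- `𝒪_X`, the collection of non-trivial open covers of `X`. -/
def OX (X : Type u) [TopologicalSpace X] : Set (Set (Set X)) := {𝒰 | NTOpenCover X 𝒰}

/-- The Hurewicz property. -/
def HurewiczProp (X : Type u) [TopologicalSpace X] : Prop :=
  ∀ 𝒰 : ℕ → Set (Set X), (∀ n, 𝒰 n ∈ OX X) →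
    ∃ ℱ : ℕ → Set (Set X), (∀ n, ℱ n ⊆ 𝒰 n ∧ (ℱ n).Finite) ∧
      ∀ x : X, ∃ m : ℕ, ∀ n ≥ m, x ∈ ⋃₀ ℱ n

/-- The selection principle `S_fin(𝒜, ℬ)`. -/
def Sfin {α : Type u} (𝒜 ℬ : Set (Set α)) : Prop :=
  ∀ 𝒰 : ℕ → Set α, (∀ n, 𝒰 n ∈ 𝒜) →
    ∃ ℱ : ℕ → Set α, (∀ n, ℱ n ⊆ 𝒰 n ∧ (ℱ n).Finite) ∧ (⋃ n, ℱ n) ∈ ℬ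

/-- The selection principle `S_1(𝒜, ℬ)`. -/
def Sone {α : Type u} (𝒜 ℬ : Set (Set α)) : Prop :=
  ∀ 𝒰 : ℕ → Set α, (∀ n, 𝒰 n ∈ 𝒜) →
    ∃ f : ℕ → α, (∀ n, f n ∈ 𝒰 n) ∧ Set.range f ∈ ℬ

/-- A member `C` of a collection `ℭ` is groupable if there is a finite-to-one map
`φ : C → ℕ` such that for every infinite `J ⊆ ℕ`, `⋃ {φ⁻¹(n) : n ∈ J} ∈ ℭ`. -/
def Groupable {α : Type u} (ℭ : Set (Set α)) (C : Set α) : Prop :=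
  ∃ φ : α → ℕ, (∀ n : ℕ, {x ∈ C | φ x = n}.Finite) ∧
    ∀ J : Set ℕ, J.Infinite → {x ∈ C | φ x ∈ J} ∈ ℭ

/-- `ℭ^gp`, the collection of groupable members of `ℭ`. -/
def groupables {α : Type u} (ℭ : Set (Set α)) : Set (Set α) :=
  {C | C ∈ ℭ ∧ Groupable ℭ C}

/-- The Menger property. -/
def MengerProp (X : Type u) [TopologicalSpace X] : Prop := Sfin (OX X) (OX X)

/-- The Rothberger property. -/
def RothbergerProp (X : Type u) [TopologicalSpace X] : Prop := Sone (OX X) (OX X)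

/-- The Gerlits-Nagy property: Hurewicz and Rothberger. -/
def GerlitsNagyProp (X : Type u) [TopologicalSpace X] : Prop :=
  HurewiczProp X ∧ RothbergerProp X

/-- `𝒪_X(𝒜)`, the collection of `𝒜`-covers of `X`. -/
def ACovers (X : Type u) [TopologicalSpace X] (𝒜 : Set (Set X)) : Set (Set (Set X)) :=
  {𝒰 | 𝒰 ∈ OX X ∧ ∀ A ∈ 𝒜, ∃ U ∈ 𝒰, A ⊆ U}

/-- `𝒦_X`, the collection of `k`-covers of `X`. -/
def KCovers (X : Type u) [TopologicalSpace X] : Set (Set (Set X)) :=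
  {𝒰 | 𝒰 ∈ OX X ∧ ∀ K : Set X, IsCompact K → K.Nonempty → ∃ U ∈ 𝒰, K ⊆ U}

/-- `Ω_X`, the collection of `ω`-covers of `X`. -/
def OmegaCovers (X : Type u) [TopologicalSpace X] : Set (Set (Set X)) :=
  {𝒰 | 𝒰 ∈ OX X ∧ ∀ F : Set X, F.Finite → F.Nonempty → ∃ U ∈ 𝒰, F ⊆ U}

/-- An ideal of closed sets of `X`. -/
def IdealOfClosedSets (X : Type u) [TopologicalSpace X] (𝒜 : Set (Set X)) : Prop :=
  (∀ A ∈ 𝒜, IsClosed A ∧ A.Nonempty ∧ A ≠ Set.univ) ∧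
  (∀ F : Set X, F.Finite → F.Nonempty → F ∈ 𝒜) ∧
  (∀ A B : Set X, A ∈ 𝒜 → B ∈ 𝒜 → A ∪ B ≠ Set.univ → A ∪ B ∈ 𝒜) ∧
  (∀ A ∈ 𝒜, ∀ B : Set X, B ⊆ A → IsClosed B → B.Nonempty → B ∈ 𝒜)

/-- One has a winning strategy in the Hurewicz game on `X`. -/
def OneWinsHurewicz (X : Type u) [TopologicalSpace X] : Prop :=
  ∃ σ : List (Set (Set X)) → Set (Set X), (∀ s, σ s ∈ OX X) ∧
    ∀ F : ℕ → Set (Set X),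
      (∀ n, (F n).Finite ∧ F n ⊆ σ (List.ofFn fun i : Fin n => F i)) →
        ∃ x : X, ∀ m : ℕ, ∃ n ≥ m, x ∉ ⋃₀ F n

/-- One has a winning strategy in `G_fin(𝒜, ℬ)`. -/
def OneWinsGfin {α : Type u} (𝒜 ℬ : Set (Set α)) : Prop :=
  ∃ σ : List (Set α) → Set α, (∀ s, σ s ∈ 𝒜) ∧
    ∀ F : ℕ → Set α,
      (∀ n, (F n).Finite ∧ F n ⊆ σ (List.ofFn fun i : Fin n => F i)) →
        (⋃ n, F n) ∉ ℬ

/-- One has a winning predetermined strategy in `G_fin(𝒜, ℬ)`. -/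
def OneWinsPreGfin {α : Type u} (𝒜 ℬ : Set (Set α)) : Prop :=
  ∃ σ : ℕ → Set α, (∀ n, σ n ∈ 𝒜) ∧
    ∀ F : ℕ → Set α, (∀ n, (F n).Finite ∧ F n ⊆ σ n) → (⋃ n, F n) ∉ ℬ

/-- One has a winning strategy in `G_1(𝒜, ℬ)`. -/
def OneWinsGone {α : Type u} (𝒜 ℬ : Set (Set α)) : Prop :=
  ∃ σ : List α → Set α, (∀ s, σ s ∈ 𝒜) ∧
    ∀ f : ℕ → α, (∀ n, f n ∈ σ (List.ofFn fun i : Fin n => f i)) → Set.range f ∉ ℬ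

/-- One has a winning predetermined strategy in `G_1(𝒜, ℬ)`. -/
def OneWinsPreGone {α : Type u} (𝒜 ℬ : Set (Set α)) : Prop :=
  ∃ σ : ℕ → Set α, (∀ n, σ n ∈ 𝒜) ∧
    ∀ f : ℕ → α, (∀ n, f n ∈ σ n) → Set.range f ∉ ℬ

/-- The collection `𝒜` of subsets of `X`, viewed as a hyperspace with the Vietoris topology. -/
def Hyper (X : Type u) (𝒜 : Set (Set X)) : Type u := {K : Set X // K ∈ 𝒜}

/-- The Vietoris topology on `Hyper X 𝒜`. -/
instance Hyper.topologicalSpace (X : Type u) [TopologicalSpace X] (𝒜 : Set (Set X)) :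
    TopologicalSpace (Hyper X 𝒜) :=
  TopologicalSpace.generateFrom
    {S | ∃ U : Set X, IsOpen U ∧
      (S = {K : Hyper X 𝒜 | K.1 ⊆ U} ∨ S = {K : Hyper X 𝒜 | (K.1 ∩ U).Nonempty})}

/-- `𝕂(X)`: the nonempty compact subsets of `X` with the Vietoris topology. -/
abbrev HyperK (X : Type u) [TopologicalSpace X] : Type u :=
  Hyper X {K : Set X | IsCompact K ∧ K.Nonempty}

/-- `𝒫_fin(X)`: the nonempty finite subsets of `X` with the Vietoris topology. -/
abbrev PFin (X : Type u) : Type u :=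
  Hyper X {F : Set X | F.Finite ∧ F.Nonempty}

/-- `C_p(X)`: continuous real-valued functions with the topology of pointwise convergence
(the subspace topology from the product topology on `X → ℝ`). -/
abbrev Cp (X : Type u) [TopologicalSpace X] : Type u := {f : X → ℝ // Continuous f}

/-- `C_k(X)`: continuous real-valued functions with the compact-open topology. -/
def Ck (X : Type u) [TopologicalSpace X] : Type u := {f : X → ℝ // Continuous f}

instance Ck.topologicalSpace (X : Type u) [TopologicalSpace X] : TopologicalSpace (Ck X) :=
  TopologicalSpace.generateFrom
    {S | ∃ (K : Set X) (U : Set ℝ), IsCompact K ∧ IsOpen U ∧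
      S = {f : Ck X | ∀ x ∈ K, f.1 x ∈ U}}

/-- The constantly zero function in `C_p(X)`. -/
def zeroCp (X : Type u) [TopologicalSpace X] : Cp X := ⟨fun _ => (0 : ℝ), continuous_const⟩

/-- The constantly zero function in `C_k(X)`. -/
def zeroCk (X : Type u) [TopologicalSpace X] : Ck X := ⟨fun _ => (0 : ℝ), continuous_const⟩

/-- `Ω_{Y,y}`: the sets having `y` in their closure but not containing `y`. -/
def OmegaPt (Y : Type u) [TopologicalSpace Y] (y : Y) : Set (Set Y) :=
  {A | y ∈ closure A ∧ y ∉ A}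

/-- Countable fan-tightness. -/
def CountableFanTightness (Y : Type u) [TopologicalSpace Y] : Prop :=
  ∀ y : Y, Sfin (OmegaPt Y y) (OmegaPt Y y)

/-- Countable strong fan-tightness. -/
def CountableStrongFanTightness (Y : Type u) [TopologicalSpace Y] : Prop :=
  ∀ y : Y, Sone (OmegaPt Y y) (OmegaPt Y y)

/-- The Reznichenko property: every countable member of `Ω_{Y,y}` is groupable. -/
def Reznichenko (Y : Type u) [TopologicalSpace Y] : Prop :=
  ∀ y : Y, ∀ A ∈ OmegaPt Y y, A.Countable → Groupable (OmegaPt Y y) A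

theorem statement14 {X : Type u} [TopologicalSpace X] [T2Space X] [CompletelyRegularSpace X]
    (hX : ¬ CompactSpace X) (ℱ : Set (Ck X))
    (hcl : zeroCk X ∈ closure ℱ) (hmem : zeroCk X ∉ ℱ) (n : ℕ) :
    {U : Set X | IsOpen U ∧ U.Nonempty ∧ U ≠ Set.univ ∧
      ∃ (K : Set X) (f : Ck X), IsCompact K ∧ K.Nonempty ∧ f ∈ ℱ ∧
        K ⊆ U ∧ U ⊆ f.1 ⁻¹' Set.Ioo (-(((2:ℝ) ^ n)⁻¹)) (((2:ℝ) ^ n)⁻¹)} ∈ KCovers X := by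
  have hεpos : (0:ℝ) < ((2:ℝ) ^ n)⁻¹ := by positivity
  -- main claim: every nonempty compact set is contained in some member
  have key : ∀ K : Set X, IsCompact K → K.Nonempty →
      ∃ U ∈ {U : Set X | IsOpen U ∧ U.Nonempty ∧ U ≠ Set.univ ∧
        ∃ (K : Set X) (f : Ck X), IsCompact K ∧ K.Nonempty ∧ f ∈ ℱ ∧
          K ⊆ U ∧ U ⊆ f.1 ⁻¹' Set.Ioo (-(((2:ℝ) ^ n)⁻¹)) (((2:ℝ) ^ n)⁻¹)}, K ⊆ U := by
    intro K hK hKne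
    have hKne_univ : K ≠ Set.univ := by
      intro h
      exact hX ⟨h ▸ hK⟩
    obtain ⟨x₀, hx₀⟩ : ∃ x₀, x₀ ∉ K := by
      by_contra h
      push_neg at h
      exact hKne_univ (Set.eq_univ_of_forall h)
    obtain ⟨g, hg_cont, hg0, hg1⟩ :=
      CompletelyRegularSpace.completely_regular x₀ K hK.isClosed hx₀
    -- the basic compact-open neighborhood of 0
    set S : Set (Ck X) :=
      {h : Ck X | ∀ x ∈ K, h.1 x ∈ Set.Ioo (-(((2:ℝ) ^ n)⁻¹)) (((2:ℝ) ^ n)⁻¹)} with hS_def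
    have hS_open : IsOpen S :=
      TopologicalSpace.isOpen_generateFrom_of_mem
        ⟨K, Set.Ioo (-(((2:ℝ) ^ n)⁻¹)) (((2:ℝ) ^ n)⁻¹), hK, isOpen_Ioo, rfl⟩
    have hz : zeroCk X ∈ S := by
      intro x _
      show (0:ℝ) ∈ Set.Ioo _ _
      exact ⟨by linarith, hεpos⟩
    obtain ⟨f, hfS, hfℱ⟩ := mem_closure_iff.mp hcl S hS_open hz
    -- the set
    refine ⟨f.1 ⁻¹' Set.Ioo (-(((2:ℝ) ^ n)⁻¹)) (((2:ℝ) ^ n)⁻¹) ∩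
      (fun x => (g x : ℝ)) ⁻¹' Set.Ioi (1/2 : ℝ), ?_, ?_⟩
    · have hgcont : Continuous (fun x => (g x : ℝ)) := continuous_subtype_val.comp hg_cont
      have hopen : IsOpen (f.1 ⁻¹' Set.Ioo (-(((2:ℝ) ^ n)⁻¹)) (((2:ℝ) ^ n)⁻¹) ∩
          (fun x => (g x : ℝ)) ⁻¹' Set.Ioi (1/2 : ℝ)) :=
        (isOpen_Ioo.preimage f.2).inter (isOpen_Ioi.preimage hgcont)
      have hKsub : K ⊆ f.1 ⁻¹' Set.Ioo (-(((2:ℝ) ^ n)⁻¹)) (((2:ℝ) ^ n)⁻¹) ∩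
          (fun x => (g x : ℝ)) ⁻¹' Set.Ioi (1/2 : ℝ) := by
        intro x hx
        refine ⟨hfS x hx, ?_⟩
        have : g x = 1 := hg1 hx
        simp only [Set.mem_preimage, this, Set.mem_Ioi]
        norm_num [Set.Icc.coe_one]
      refine ⟨hopen, hKne.mono hKsub, ?_, K, f, hK, hKne, hfℱ, hKsub,
        Set.inter_subset_left⟩
      intro h
      have : x₀ ∈ f.1 ⁻¹' Set.Ioo (-(((2:ℝ) ^ n)⁻¹)) (((2:ℝ) ^ n)⁻¹) ∩
          (fun x => (g x : ℝ)) ⁻¹' Set.Ioi (1/2 : ℝ) := h ▸ Set.mem_univ x₀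
      have h2 := this.2
      simp only [Set.mem_preimage, hg0, Set.mem_Ioi] at h2
      norm_num [Set.Icc.coe_zero] at h2
    · intro x hx
      refine ⟨hfS x hx, ?_⟩
      have : g x = 1 := hg1 hx
      simp only [Set.mem_preimage, this, Set.mem_Ioi]
      norm_num [Set.Icc.coe_one]
  refine ⟨⟨fun U hU => ⟨hU.1, hU.2.1, hU.2.2.1⟩, ?_⟩, fun K hK hKne => key K hK hKne⟩
  apply Set.eq_univ_of_forall
  intro x
  obtain ⟨U, hU, hxU⟩ := key {x} isCompact_singleton (Set.singleton_nonempty x)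
  exact ⟨U, hU, hxU rfl⟩
end

section
/- Let X be a non-compact Tychonoff space. The following are equivalent: (i) X satisfies S_fin(𝒦_X, 𝒦_X^gp); (ii) One does not have a winning strategy in the game G_fin(𝒦_X, 𝒦_X^gp); (iii) C_k(X) is Reznichenko and has countable fan-tightness; (iv) C_k(X) satisfies S_fin(Ω_{C_k(X),𝟎}, Ω_{C_k(X),𝟎}^gp). -/
open Set TopologicalSpace

universe u

namespace S16

open Classical

variable {X : Type u} [TopologicalSpace X]

/-- Legality of a member of a non-trivial cover. -/
def Leg (X : Type u) [TopologicalSpace X] (U : Set X) : Prop :=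
  IsOpen U ∧ U.Nonempty ∧ U ≠ Set.univ

lemma kcovers_mk {𝒰 : Set (Set X)} (h1 : ∀ U ∈ 𝒰, Leg X U)
    (h2 : ∀ K : Set X, IsCompact K → K.Nonempty → ∃ U ∈ 𝒰, K ⊆ U) : 𝒰 ∈ KCovers X := by
  refine ⟨⟨h1, ?_⟩, h2⟩
  apply Set.eq_univ_of_forall
  intro x
  obtain ⟨U, hU, hx⟩ := h2 {x} isCompact_singleton ⟨x, rfl⟩
  exact ⟨U, hU, hx rfl⟩

lemma kcovers_leg {𝒰 : Set (Set X)} (h : 𝒰 ∈ KCovers X) : ∀ U ∈ 𝒰, Leg X U := h.1.1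

lemma kcovers_wit {𝒰 : Set (Set X)} (h : 𝒰 ∈ KCovers X) :
    ∀ K : Set X, IsCompact K → K.Nonempty → ∃ U ∈ 𝒰, K ⊆ U := h.2

omit [TopologicalSpace X] in
lemma exists_notMem_of_ne_univ {U : Set X} (h : U ≠ Set.univ) : ∃ x, x ∉ U := by
  by_contra hc
  push_neg at hc
  exact h (Set.eq_univ_of_forall hc)

/-- In a k-cover, each compact set has infinitely many witnesses. -/
lemma kcovers_witness_infinite [Nonempty X] {𝒰 : Set (Set X)} (h : 𝒰 ∈ KCovers X) {K : Set X}
    (hK : IsCompact K) : {U ∈ 𝒰 | K ⊆ U}.Infinite := by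
  by_contra hninf
  rw [Set.not_infinite] at hninf
  have hesc : ∀ U : Set X, ∃ x : X, U ∈ {U ∈ 𝒰 | K ⊆ U} → x ∉ U := by
    intro U
    by_cases hU : U ∈ {U ∈ 𝒰 | K ⊆ U}
    · obtain ⟨x, hx⟩ := exists_notMem_of_ne_univ (kcovers_leg h U hU.1).2.2
      exact ⟨x, fun _ => hx⟩
    · exact ⟨Classical.arbitrary X, fun hU' => absurd hU' hU⟩
  choose g hg using hesc
  have hK' : IsCompact (insert (Classical.arbitrary X) (K ∪ g '' {U ∈ 𝒰 | K ⊆ U})) :=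
    (hK.union (hninf.image g).isCompact).insert _
  obtain ⟨U', hU', hsub⟩ := kcovers_wit h _ hK' (Set.insert_nonempty _ _)
  have hU'S : U' ∈ {U ∈ 𝒰 | K ⊆ U} :=
    ⟨hU', fun x hx => hsub (Set.mem_insert_iff.mpr (Or.inr (Or.inl hx)))⟩
  exact hg U' hU'S (hsub (Set.mem_insert_iff.mpr (Or.inr (Or.inr ⟨U', hU'S, rfl⟩))))

lemma kcovers_superset {S S' : Set (Set X)} (h : S ∈ KCovers X) (hsub : S ⊆ S')
    (hleg : ∀ U ∈ S', Leg X U) : S' ∈ KCovers X :=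
  kcovers_mk hleg (fun K hK hKne => by
    obtain ⟨U, hU, hKU⟩ := kcovers_wit h K hK hKne
    exact ⟨U, hsub hU, hKU⟩)

/-- Extension lemma on the cover side: a countable legal superset of a groupable
k-cover is a groupable k-cover. -/
lemma groupables_superset {Y Y' : Set (Set X)} (hc : Y.Countable)
    (hleg : ∀ U ∈ Y, Leg X U) (hsub : Y' ⊆ Y)
    (h : Y' ∈ groupables (KCovers X)) : Y ∈ groupables (KCovers X) := by
  obtain ⟨hY'K, φ, hfib, hJ⟩ := h
  have hYK : Y ∈ KCovers X := kcovers_superset hY'K hsub hleg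
  obtain ⟨e, he⟩ := Set.countable_iff_exists_injOn.mp hc
  refine ⟨hYK, fun U => if U ∈ Y' then φ U else e U, ?_, ?_⟩
  · intro n
    have hss : {x ∈ Y | (if x ∈ Y' then φ x else e x) = n} ⊆
        {x ∈ Y' | φ x = n} ∪ {x ∈ Y \ Y' | e x = n} := by
      rintro x ⟨hxY, hx⟩
      by_cases hx' : x ∈ Y'
      · rw [if_pos hx'] at hx; exact Or.inl ⟨hx', hx⟩
      · rw [if_neg hx'] at hx; exact Or.inr ⟨⟨hxY, hx'⟩, hx⟩
    refine Set.Finite.subset (Set.Finite.union (hfib n) ?_) hss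
    apply Set.Subsingleton.finite
    rintro a ⟨ha, hae⟩ b ⟨hb, hbe⟩
    exact he ha.1 hb.1 (hae.trans hbe.symm)
  · intro J hJinf
    refine kcovers_superset (hJ J hJinf) ?_ ?_
    · rintro x ⟨hx, hφ⟩
      refine ⟨hsub hx, ?_⟩
      dsimp only
      rw [if_pos hx]
      exact hφ
    · rintro U ⟨hU, _⟩
      exact hleg U hU

/-- From `S_fin(𝒦,𝒦ᵍᵖ)`: every k-cover has a countable groupable k-subcover. -/
lemma exists_countable_gp_subcover (hs : Sfin (KCovers X) (groupables (KCovers X)))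
    {𝒰 : Set (Set X)} (h𝒰 : 𝒰 ∈ KCovers X) :
    ∃ C ⊆ 𝒰, C.Countable ∧ C ∈ groupables (KCovers X) := by
  obtain ⟨F, hF, hgp⟩ := hs (fun _ => 𝒰) (fun _ => h𝒰)
  exact ⟨⋃ n, F n, Set.iUnion_subset (fun n => (hF n).1),
    Set.countable_iUnion (fun n => ((hF n).2).countable), hgp⟩

omit [TopologicalSpace X] in
lemma biInter_range_subset (W : ℕ → Set X) {m r : ℕ} (hr : r < m + 1) :
    (⋂ i ∈ Finset.range (m + 1), W i) ⊆ W r :=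
  fun x hx => Set.mem_iInter₂.mp hx r (Finset.mem_range.mpr hr)

/-- Finite refinements of a sequence of k-covers. -/
def refCov (𝒰 : ℕ → Set (Set X)) (m : ℕ) : Set (Set X) :=
  {V | V.Nonempty ∧ ∃ W : ℕ → Set X, (∀ r ≤ m, W r ∈ 𝒰 r) ∧
    V = ⋂ r ∈ Finset.range (m + 1), W r}

lemma refCov_mem {𝒰 : ℕ → Set (Set X)} (h : ∀ r, 𝒰 r ∈ KCovers X) (m : ℕ) :
    refCov 𝒰 m ∈ KCovers X := by
  apply kcovers_mk
  · rintro V ⟨hne, W, hW, rfl⟩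
    refine ⟨isOpen_biInter_finset (fun r hr => ?_), hne, ?_⟩
    · exact (kcovers_leg (h r) _ (hW r (by simpa [Nat.lt_succ_iff] using hr))).1
    · intro hEq
      have h0 : (⋂ r ∈ Finset.range (m + 1), W r) ⊆ W 0 :=
        biInter_range_subset W (Nat.succ_pos m)
      rw [hEq] at h0
      exact (kcovers_leg (h 0) _ (hW 0 (Nat.zero_le m))).2.2
        (Set.eq_univ_of_univ_subset h0)
  · intro K hK hKne
    have hwit : ∀ r : ℕ, ∃ U ∈ 𝒰 r, K ⊆ U := fun r => kcovers_wit (h r) K hK hKne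
    choose W hW1 hW2 using hwit
    refine ⟨⋂ r ∈ Finset.range (m + 1), W r, ⟨?_, W, fun r _ => hW1 r, rfl⟩, ?_⟩
    · obtain ⟨x, hx⟩ := hKne
      exact ⟨x, Set.mem_iInter₂.mpr (fun r _ => hW2 r hx)⟩
    · intro x hx
      exact Set.mem_iInter₂.mpr (fun r _ => hW2 r hx)

/-- Amplified finite refinements: intersections of `m+1`-element subfamilies from
each of the first `m+1` covers. -/
def refCovA (𝒰 : ℕ → Set (Set X)) (m : ℕ) : Set (Set X) :=
  {V | V.Nonempty ∧ ∃ Fs : ℕ → Finset (Set X),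
    (∀ r ≤ m, ↑(Fs r) ⊆ 𝒰 r ∧ (Fs r).card = m + 1) ∧
    V = ⋂ r ∈ Finset.range (m + 1), ⋂ U ∈ Fs r, U}

lemma refCovA_mem [Nonempty X] {𝒰 : ℕ → Set (Set X)} (h : ∀ r, 𝒰 r ∈ KCovers X) (m : ℕ) :
    refCovA 𝒰 m ∈ KCovers X := by
  apply kcovers_mk
  · rintro V ⟨hne, Fs, hFs, rfl⟩
    have hmem : ∀ r ≤ m, ∀ U ∈ Fs r, U ∈ 𝒰 r := fun r hr U hU => (hFs r hr).1 hU
    refine ⟨isOpen_biInter_finset (fun r hr => isOpen_biInter_finset (fun U hU => ?_)), hne, ?_⟩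
    · exact (kcovers_leg (h r) _ (hmem r (by simpa [Nat.lt_succ_iff] using hr) U hU)).1
    · intro hEq
      obtain ⟨U₀, hU₀⟩ := Finset.card_pos.mp (by rw [(hFs 0 (Nat.zero_le m)).2]; omega)
      have h0 : (⋂ r ∈ Finset.range (m + 1), ⋂ U ∈ Fs r, U) ⊆ U₀ := by
        intro x hx
        exact Set.mem_iInter₂.mp (Set.mem_iInter₂.mp hx 0 (Finset.mem_range.mpr (Nat.succ_pos m))) U₀ hU₀
      rw [hEq] at h0
      exact (kcovers_leg (h 0) _ (hmem 0 (Nat.zero_le m) U₀ hU₀)).2.2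
        (Set.eq_univ_of_univ_subset h0)
  · intro K hK hKne
    have hwit : ∀ r : ℕ, ∃ T : Finset (Set X), ↑T ⊆ {U ∈ 𝒰 r | K ⊆ U} ∧ T.card = m + 1 :=
      fun r => (kcovers_witness_infinite (h r) hK).exists_subset_card_eq (m + 1)
    choose Fs hFs1 hFs2 using hwit
    refine ⟨⋂ r ∈ Finset.range (m + 1), ⋂ U ∈ Fs r, U,
      ⟨?_, Fs, fun r _ => ⟨fun U hU => (hFs1 r hU).1, hFs2 r⟩, rfl⟩, ?_⟩
    · obtain ⟨x, hx⟩ := hKne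
      exact ⟨x, Set.mem_iInter₂.mpr (fun r _ => Set.mem_iInter₂.mpr (fun U hU => (hFs1 r hU).2 hx))⟩
    · intro x hx
      exact Set.mem_iInter₂.mpr (fun r _ => Set.mem_iInter₂.mpr (fun U hU => (hFs1 r hU).2 hx))

end S16

namespace S16

open Classical

variable {X : Type u} [TopologicalSpace X]

/-- The Hurewicz-type selection property for k-covers. -/
def KH (X : Type u) [TopologicalSpace X] : Prop :=
  ∀ 𝒰 : ℕ → Set (Set X), (∀ n, 𝒰 n ∈ KCovers X) →
    ∃ F : ℕ → Set (Set X), (∀ n, F n ⊆ 𝒰 n ∧ (F n).Finite) ∧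
      ∀ K : Set X, IsCompact K → K.Nonempty → ∃ M : ℕ, ∀ n ≥ M, ∃ U ∈ F n, K ⊆ U

/-- Groups eventually witness every compact set. -/
lemma groups_eventually {C : Set (Set X)} {φ : Set X → ℕ}
    (hJ : ∀ J : Set ℕ, J.Infinite → {x ∈ C | φ x ∈ J} ∈ KCovers X)
    {K : Set X} (hK : IsCompact K) (hKne : K.Nonempty) :
    ∃ j₀ : ℕ, ∀ j ≥ j₀, ∃ V, V ∈ C ∧ φ V = j ∧ K ⊆ V := by
  set Bad := {j : ℕ | ¬ ∃ V, V ∈ C ∧ φ V = j ∧ K ⊆ V} with hBad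
  have hBadFin : Bad.Finite := by
    by_contra hinf
    have hinf' : Bad.Infinite := hinf
    obtain ⟨V, hV, hKV⟩ := kcovers_wit (hJ Bad hinf') K hK hKne
    exact hV.2 ⟨V, hV.1, rfl, hKV⟩
  obtain ⟨b, hb⟩ := hBadFin.bddAbove
  refine ⟨b + 1, fun j hj => ?_⟩
  by_contra hc
  have hjB : j ∈ Bad := hc
  have := hb hjB
  omega

lemma finite_le_fibers {C : Set (Set X)} {φ : Set X → ℕ}
    (hfib : ∀ n : ℕ, {x ∈ C | φ x = n}.Finite) (z : ℕ) :
    {x ∈ C | φ x ≤ z}.Finite := by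
  induction z with
  | zero =>
    refine (hfib 0).subset ?_
    rintro x ⟨h1, h2⟩
    exact ⟨h1, Nat.le_zero.mp h2⟩
  | succ z ih =>
    refine (ih.union (hfib (z + 1))).subset ?_
    rintro x ⟨h1, h2⟩
    rcases Nat.lt_or_ge (φ x) (z + 1) with h | h
    · exact Or.inl ⟨h1, by omega⟩
    · exact Or.inr ⟨h1, by omega⟩

/-- Key Lemma: `S_fin(𝒦,𝒦ᵍᵖ)` implies the Hurewicz-type property for k-covers. -/
theorem sfin_to_KH [Nonempty X] (hs : Sfin (KCovers X) (groupables (KCovers X))) : KH X := by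
  intro 𝒰 h𝒰
  obtain ⟨G, hG, hCgp⟩ := hs (refCov 𝒰) (fun m => refCov_mem h𝒰 m)
  obtain ⟨hCK, φ, hfib, hJ⟩ := hCgp
  set C := ⋃ n, G n with hCdef
  have hstage : ∀ V, V ∈ C → ∃ n, V ∈ G n := fun V hV => Set.mem_iUnion.mp hV
  set s : Set X → ℕ := fun V => if h : ∃ n, V ∈ G n then Nat.find h else 0 with hsdef
  have hsmem : ∀ V, V ∈ C → V ∈ G (s V) := by
    intro V hV
    obtain ⟨n, hn⟩ := hstage V hV
    have hex : ∃ n, V ∈ G n := ⟨n, hn⟩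
    simp only [hsdef, dif_pos hex]
    exact Nat.find_spec hex
  have hVref : ∀ V, V ∈ C → V ∈ refCov 𝒰 (s V) := fun V hV => (hG (s V)).1 (hsmem V hV)
  set w : Set X → ℕ → Set X := fun V r =>
    if h : V ∈ refCov 𝒰 (s V) then Classical.choose h.2 r else ∅ with hwdef
  have hwprop : ∀ V, V ∈ C → ∀ r ≤ s V, w V r ∈ 𝒰 r ∧ V ⊆ w V r := by
    intro V hV r hr
    have h := hVref V hV
    have hspec := Classical.choose_spec h.2
    constructor
    · simp only [hwdef, dif_pos h]
      exact hspec.1 r hr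
    · intro x hx
      rw [hspec.2] at hx
      simp only [hwdef, dif_pos h]
      exact Set.mem_iInter₂.mp hx r (Finset.mem_range.mpr (Nat.lt_succ_of_le hr))
  have hGfin : ∀ m : ℕ, (⋃ i ∈ Finset.range m, G i).Finite :=
    fun m => Set.Finite.biUnion (Finset.range m).finite_toSet (fun i _ => (hG i).2)
  set N : ℕ → ℕ := fun m => (hGfin m).toFinset.card with hNdef
  set z : ℕ → ℕ := fun m => N m + m with hzdef
  set F : ℕ → Set (Set X) := fun m =>
    (fun V => w V m) '' {V | V ∈ C ∧ m ≤ s V ∧ φ V ≤ z m} with hFdef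
  have hFsub : ∀ m, F m ⊆ 𝒰 m := by
    rintro m u ⟨V, ⟨hVC, hm, _⟩, rfl⟩
    exact (hwprop V hVC m hm).1
  have hFfin : ∀ m, (F m).Finite := by
    intro m
    apply Set.Finite.image
    refine (finite_le_fibers hfib (z m)).subset ?_
    rintro V ⟨hVC, _, hφ⟩
    exact ⟨hVC, hφ⟩
  refine ⟨F, fun m => ⟨hFsub m, hFfin m⟩, ?_⟩
  intro K hK hKne
  obtain ⟨j₀, hj₀⟩ := groups_eventually hJ hK hKne
  refine ⟨j₀, fun m hm => ?_⟩
  have hmain : ∃ V, V ∈ C ∧ K ⊆ V ∧ m ≤ s V ∧ φ V ≤ z m := by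
    by_contra hc
    push_neg at hc
    have hwitfun : ∀ j : ℕ, ∃ V : Set X, j₀ ≤ j → (V ∈ C ∧ φ V = j ∧ K ⊆ V) := by
      intro j
      by_cases hj : j₀ ≤ j
      · obtain ⟨V, h1, h2, h3⟩ := hj₀ j hj
        exact ⟨V, fun _ => ⟨h1, h2, h3⟩⟩
      · exact ⟨∅, fun h => absurd h hj⟩
    choose Vw hVw using hwitfun
    have hVwst : ∀ j, j₀ ≤ j → j ≤ z m → s (Vw j) < m := by
      intro j h1 _
      obtain ⟨hC', hφ', hK'⟩ := hVw j h1
      by_contra hge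
      push_neg at hge
      have := hc (Vw j) hC' hK' hge
      omega
    have hcard : (Finset.Icc j₀ (z m)).card ≤ (hGfin m).toFinset.card := by
      apply Finset.card_le_card_of_injOn Vw
      · intro j hj
        rw [Finset.mem_coe, Finset.mem_Icc] at hj
        rw [Finset.mem_coe, Set.Finite.mem_toFinset]
        have h1 := (hVw j hj.1).1
        have hlt := hVwst j hj.1 hj.2
        exact Set.mem_biUnion (Finset.mem_coe.mpr (Finset.mem_range.mpr hlt)) (hsmem _ h1)
      · intro a ha b hb hab
        rw [Finset.mem_coe, Finset.mem_Icc] at ha hb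
        have hφab : φ (Vw a) = φ (Vw b) := by rw [hab]
        rw [(hVw a ha.1).2.1, (hVw b hb.1).2.1] at hφab
        exact hφab
    rw [Nat.card_Icc] at hcard
    have hzm : z m = N m + m := rfl
    have hNm : (hGfin m).toFinset.card = N m := rfl
    omega
  obtain ⟨V, hVC, hKV, hm', hφ'⟩ := hmain
  exact ⟨w V m, ⟨V, ⟨hVC, hm', hφ'⟩, rfl⟩, hKV.trans (hwprop V hVC m hm').2⟩

end S16

namespace S16

open Classical

variable {X : Type u} [TopologicalSpace X]

/-- The groupable-selection principle follows from the Hurewicz-type property. -/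
theorem KH_to_sfin [Nonempty X] (hk : KH X) : Sfin (KCovers X) (groupables (KCovers X)) := by
  intro 𝒰 h𝒰
  obtain ⟨G, hG, hev⟩ := hk (refCovA 𝒰) (fun m => refCovA_mem h𝒰 m)
  set FF : ℕ → Set X → (ℕ → Finset (Set X)) := fun m V =>
    if h : V ∈ refCovA 𝒰 m then Classical.choose h.2 else fun _ => ∅ with hFFdef
  have hFF : ∀ m V, V ∈ refCovA 𝒰 m → ∀ r ≤ m,
      ↑(FF m V r) ⊆ 𝒰 r ∧ (FF m V r).card = m + 1 ∧ ∀ U ∈ FF m V r, V ⊆ U := by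
    intro m V hV r hr
    have hspec := Classical.choose_spec hV.2
    simp only [hFFdef, dif_pos hV]
    refine ⟨(hspec.1 r hr).1, (hspec.1 r hr).2, fun U hU x hx => ?_⟩
    rw [hspec.2] at hx
    exact Set.mem_iInter₂.mp (Set.mem_iInter₂.mp hx r
      (Finset.mem_range.mpr (Nat.lt_succ_of_le hr))) U hU
  set Cnd : ℕ → Finset (Set X) := fun m => ((hG m).2.toFinset).biUnion (fun V => FF m V m)
    with hCnddef
  set D : ℕ → ℕ := fun m => (Cnd m).card with hDdef
  set t : ℕ → ℕ × ℕ := fun k => Nat.rec (motive := fun _ => ℕ × ℕ) (0, D 0)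
    (fun _ p => (p.1 + 1 + p.2, p.2 + D (p.1 + 1 + p.2))) k with htdef
  set sq : ℕ → ℕ := fun k => (t k).1 with hsqdef
  set Ssum : ℕ → ℕ := fun k => (t k).2 with hSdef
  have ht0 : t 0 = (0, D 0) := rfl
  have htS : ∀ k, t (k + 1) = ((t k).1 + 1 + (t k).2, (t k).2 + D ((t k).1 + 1 + (t k).2)) :=
    fun k => rfl
  have hsqS : ∀ k, sq (k + 1) = sq k + 1 + Ssum k := fun k => by
    simp only [hsqdef, hSdef, htS]
  have hSsumS : ∀ k, Ssum (k + 1) = Ssum k + D (sq (k + 1)) := fun k => by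
    simp only [hsqdef, hSdef, htS]
  have hsqmono : StrictMono sq := strictMono_nat_of_lt_succ (fun k => by
    rw [hsqS]; omega)
  have hsqge : ∀ k, k ≤ sq k := fun k => hsqmono.le_apply
  set Forb : ℕ → Finset (Set X) := fun k => (Finset.range k).biUnion (fun j => Cnd (sq j))
    with hForbdef
  have hForbcard : ∀ k, (Forb (k + 1)).card ≤ Ssum k := by
    intro k
    induction k with
    | zero =>
      have h1 : Forb 1 = Cnd (sq 0) := by
        simp only [hForbdef, Finset.range_one, Finset.singleton_biUnion]
      rw [h1]
      have h2 : Ssum 0 = D (sq 0) := by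
        simp only [hSdef, hsqdef, ht0]
      exact le_of_eq h2.symm
    | succ k ih =>
      have hsplit : Forb (k + 2) ⊆ Forb (k + 1) ∪ Cnd (sq (k + 1)) := by
        intro x hx
        simp only [hForbdef, Finset.mem_biUnion, Finset.mem_range] at hx
        obtain ⟨j, hj, hxj⟩ := hx
        rcases Nat.lt_or_ge j (k + 1) with h | h
        · exact Finset.mem_union_left _ (by
            simp only [hForbdef, Finset.mem_biUnion, Finset.mem_range]
            exact ⟨j, h, hxj⟩)
        · have hjk : j = k + 1 := by omega
          subst hjk
          exact Finset.mem_union_right _ hxj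
      calc (Forb (k + 2)).card ≤ (Forb (k + 1) ∪ Cnd (sq (k + 1))).card :=
            Finset.card_le_card hsplit
        _ ≤ (Forb (k + 1)).card + (Cnd (sq (k + 1))).card := Finset.card_union_le _ _
        _ ≤ Ssum k + D (sq (k + 1)) := Nat.add_le_add ih le_rfl
        _ = Ssum (k + 1) := (hSsumS k).symm
  have hForblt : ∀ k, (Forb k).card < sq k + 1 := by
    intro k
    cases k with
    | zero => simp [hForbdef]
    | succ k =>
      have h1 := hForbcard k
      have h2 := hsqS k
      omega
  have hufresh : ∀ k, ∀ V ∈ G (sq k), ∃ u, u ∈ FF (sq k) V (sq k) ∧ u ∉ Forb k := by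
    intro k V hV
    have hVr : V ∈ refCovA 𝒰 (sq k) := (hG (sq k)).1 hV
    have hcard := (hFF (sq k) V hVr (sq k) le_rfl).2.1
    have hne : (FF (sq k) V (sq k) \ Forb k).Nonempty := by
      by_contra hc
      rw [Finset.not_nonempty_iff_eq_empty, Finset.sdiff_eq_empty_iff_subset] at hc
      have hle := Finset.card_le_card hc
      rw [hcard] at hle
      have := hForblt k
      omega
    obtain ⟨u, hu⟩ := hne
    rw [Finset.mem_sdiff] at hu
    exact ⟨u, hu.1, hu.2⟩
  set u : ℕ → Set X → Set X := fun k V =>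
    if h : V ∈ G (sq k) then Classical.choose (hufresh k V h) else ∅ with hudef
  have huprop : ∀ k, ∀ V, (hV : V ∈ G (sq k)) →
      u k V ∈ FF (sq k) V (sq k) ∧ u k V ∉ Forb k := by
    intro k V hV
    have hspec := Classical.choose_spec (hufresh k V hV)
    simp only [hudef, dif_pos hV]
    exact hspec
  set B : ℕ → Set (Set X) := fun k => (u k) '' (G (sq k)) with hBdef
  have hBCnd : ∀ k, ∀ x ∈ B k, x ∈ Cnd (sq k) := by
    rintro k x ⟨V, hV, rfl⟩
    have hVt : V ∈ (hG (sq k)).2.toFinset := (Set.Finite.mem_toFinset _).mpr hV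
    exact Finset.mem_biUnion.mpr ⟨V, hVt, (huprop k V hV).1⟩
  have hBfin : ∀ k, (B k).Finite := fun k => Set.Finite.image _ (hG (sq k)).2
  have hB𝒰 : ∀ k, B k ⊆ 𝒰 (sq k) := by
    rintro k x ⟨V, hV, rfl⟩
    have hVr : V ∈ refCovA 𝒰 (sq k) := (hG (sq k)).1 hV
    exact (hFF (sq k) V hVr (sq k) le_rfl).1 (huprop k V hV).1
  have hBV : ∀ k, ∀ V, V ∈ G (sq k) → V ⊆ u k V := by
    intro k V hV
    have hVr : V ∈ refCovA 𝒰 (sq k) := (hG (sq k)).1 hV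
    exact (hFF (sq k) V hVr (sq k) le_rfl).2.2 _ (huprop k V hV).1
  set ℱ : ℕ → Set (Set X) := fun n => if h : ∃ k, sq k = n then B (Classical.choose h) else ∅
    with hℱdef
  have hℱsq : ∀ k, ℱ (sq k) = B k := by
    intro k
    have h : ∃ k', sq k' = sq k := ⟨k, rfl⟩
    have hck : Classical.choose h = k := hsqmono.injective (Classical.choose_spec h)
    simp only [hℱdef, dif_pos h, hck]
  have hℱsub : ∀ n, ℱ n ⊆ 𝒰 n := by
    intro n
    by_cases h : ∃ k, sq k = n
    · have hck := Classical.choose_spec h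
      simp only [hℱdef, dif_pos h]
      have h1 : B (Classical.choose h) ⊆ 𝒰 (sq (Classical.choose h)) := hB𝒰 _
      rwa [hck] at h1
    · simp only [hℱdef, dif_neg h]
      exact Set.empty_subset _
  have hℱfin : ∀ n, (ℱ n).Finite := by
    intro n
    by_cases h : ∃ k, sq k = n
    · simp only [hℱdef, dif_pos h]; exact hBfin _
    · simp only [hℱdef, dif_neg h]; exact Set.finite_empty
  have hCeq : (⋃ n, ℱ n) = ⋃ k, B k := by
    apply Set.eq_of_subset_of_subset
    · intro x hx
      obtain ⟨n, hn⟩ := Set.mem_iUnion.mp hx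
      by_cases h : ∃ k, sq k = n
      · simp only [hℱdef, dif_pos h] at hn
        exact Set.mem_iUnion.mpr ⟨_, hn⟩
      · simp only [hℱdef, dif_neg h] at hn
        exact absurd hn (Set.notMem_empty x)
    · intro x hx
      obtain ⟨k, hk⟩ := Set.mem_iUnion.mp hx
      exact Set.mem_iUnion.mpr ⟨sq k, by rw [hℱsq k]; exact hk⟩
  set C : Set (Set X) := ⋃ k, B k with hCsdef
  set ψ : Set X → ℕ := fun U => if h : ∃ k, U ∈ B k then Nat.find h else 0 with hψdef
  have hψmem : ∀ U, U ∈ C → U ∈ B (ψ U) := by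
    intro U hU
    obtain ⟨k, hk⟩ := Set.mem_iUnion.mp hU
    have hex : ∃ k', U ∈ B k' := ⟨k, hk⟩
    simp only [hψdef, dif_pos hex]
    exact Nat.find_spec hex
  have hψval : ∀ k, ∀ V, V ∈ G (sq k) → ψ (u k V) = k := by
    intro k V hV
    have hmem : u k V ∈ B k := ⟨V, hV, rfl⟩
    have hex : ∃ k', u k V ∈ B k' := ⟨k, hmem⟩
    simp only [hψdef, dif_pos hex]
    have hle : Nat.find hex ≤ k := Nat.find_le hmem
    rcases Nat.lt_or_ge (Nat.find hex) k with h | h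
    · exfalso
      have hmem' : u k V ∈ B (Nat.find hex) := Nat.find_spec hex
      have hforb : u k V ∈ Forb k := by
        have hc := hBCnd (Nat.find hex) _ hmem'
        simp only [hForbdef]
        rw [Finset.mem_biUnion]
        exact ⟨Nat.find hex, Finset.mem_range.mpr h, hc⟩
      exact (huprop k V hV).2 hforb
    · omega
  have hCleg : ∀ x ∈ C, Leg X x := by
    intro x hx
    obtain ⟨k, hk⟩ := Set.mem_iUnion.mp hx
    exact kcovers_leg (h𝒰 (sq k)) x (hB𝒰 k hk)
  have hwitJ : ∀ (J : Set ℕ), (∀ M : ℕ, ∃ k ∈ J, M ≤ k) →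
      {x ∈ C | ψ x ∈ J} ∈ KCovers X := by
    intro J hJunb
    apply kcovers_mk
    · rintro x ⟨hx, _⟩; exact hCleg x hx
    · intro K hK hKne
      obtain ⟨M, hM⟩ := hev K hK hKne
      obtain ⟨k, hkJ, hkM⟩ := hJunb M
      obtain ⟨V, hV, hKV⟩ := hM (sq k) (le_trans hkM (hsqge k))
      refine ⟨u k V, ⟨Set.mem_iUnion.mpr ⟨k, ⟨V, hV, rfl⟩⟩, ?_⟩, hKV.trans (hBV k V hV)⟩
      rw [hψval k V hV]
      exact hkJ
  refine ⟨ℱ, fun n => ⟨hℱsub n, hℱfin n⟩, ?_⟩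
  rw [hCeq]
  refine ⟨?_, ψ, ?_, ?_⟩
  · have h1 := hwitJ Set.univ (fun M => ⟨M, Set.mem_univ M, le_rfl⟩)
    apply kcovers_superset h1 ?_ hCleg
    rintro x ⟨hx, _⟩; exact hx
  · intro n
    have hsub : {x ∈ C | ψ x = n} ⊆ B n := by
      rintro x ⟨hx, hψx⟩
      have := hψmem x hx
      rwa [hψx] at this
    exact Set.Finite.subset (hBfin n) hsub
  · intro J hJ
    exact hwitJ J (fun M => by
      obtain ⟨k, hk, hlt⟩ := hJ.exists_gt M
      exact ⟨k, hk, le_of_lt hlt⟩)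

end S16

namespace S16

open Classical

variable {X : Type u} [TopologicalSpace X]

omit [TopologicalSpace X] in
lemma ofFn_snoc {α : Type u} (n : ℕ) (f : ℕ → α) :
    List.ofFn (fun i : Fin (n + 1) => f i) = (List.ofFn fun i : Fin n => f i) ++ [f n] := by
  rw [List.ofFn_succ']
  simp

/-- `S_fin(𝒦,𝒦ᵍᵖ)` implies One has no winning strategy in `G_fin(𝒦,𝒦ᵍᵖ)`. -/
theorem sfin_to_not_onewins [Nonempty X]
    (hs : Sfin (KCovers X) (groupables (KCovers X))) :
    ¬ OneWinsGfin (KCovers X) (groupables (KCovers X)) := by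
  rintro ⟨σ, hσ, hwin⟩
  have hcov : ∀ h : List (Set (Set X)), ∃ C, C ⊆ σ h ∧ C.Countable ∧ C ∈ KCovers X := by
    intro h
    obtain ⟨C, h1, h2, h3⟩ := exists_countable_gp_subcover hs (hσ h)
    exact ⟨C, h1, h2, h3.1⟩
  choose cov hcov1 hcov2 hcov3 using hcov
  -- the countable tree of reachable histories
  set L : ℕ → Set (List (Set (Set X))) := fun n =>
    Nat.rec (motive := fun _ => Set (List (Set (Set X)))) {[]}
      (fun _ P => ⋃ h ∈ P, {h' | ∃ Q : Set (Set X), Q ⊆ cov h ∧ Q.Finite ∧ h' = h ++ [Q]}) n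
    with hLdef
  have hLS : ∀ n, L (n + 1) =
      ⋃ h ∈ L n, {h' | ∃ Q : Set (Set X), Q ⊆ cov h ∧ Q.Finite ∧ h' = h ++ [Q]} :=
    fun n => rfl
  have hLcnt : ∀ n, (L n).Countable := by
    intro n
    induction n with
    | zero => exact Set.countable_singleton _
    | succ n ih =>
      rw [hLS]
      apply Set.Countable.biUnion ih
      intro h _
      have hc : {Q : Set (Set X) | Q ⊆ cov h ∧ Q.Finite}.Countable := by
        have h1 := Set.countable_setOf_finite_subset (hcov2 h)
        apply Set.Countable.mono ?_ h1
        intro Q hQ; exact ⟨hQ.2, hQ.1⟩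
      have hsub : {h' | ∃ Q, Q ⊆ cov h ∧ Q.Finite ∧ h' = h ++ [Q]} ⊆
          (fun Q => h ++ [Q]) '' {Q | Q ⊆ cov h ∧ Q.Finite} := by
        rintro h' ⟨Q, h1, h2, rfl⟩; exact ⟨Q, ⟨h1, h2⟩, rfl⟩
      exact Set.Countable.mono hsub (Set.Countable.image hc _)
  set ℒ : Set (List (Set (Set X))) := ⋃ n, L n with hℒdef
  have hℒcnt : ℒ.Countable := Set.countable_iUnion hLcnt
  have hℒne : ([] : List (Set (Set X))) ∈ ℒ := Set.mem_iUnion.mpr ⟨0, rfl⟩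
  obtain ⟨tt, htt⟩ := Set.Countable.exists_eq_range hℒcnt ⟨[], hℒne⟩
  have hℒext : ∀ h ∈ ℒ, ∀ Q : Set (Set X), Q ⊆ cov h → Q.Finite → h ++ [Q] ∈ ℒ := by
    intro h hh Q h1 h2
    obtain ⟨n, hn⟩ := Set.mem_iUnion.mp hh
    refine Set.mem_iUnion.mpr ⟨n + 1, ?_⟩
    rw [hLS]
    exact Set.mem_biUnion hn ⟨Q, h1, h2, rfl⟩
  set ρ : List (Set (Set X)) → ℕ := fun h =>
    if hh : ∃ r, tt r = h then Classical.choose hh else 0 with hρdef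
  have hρ : ∀ h ∈ ℒ, tt (ρ h) = h := by
    intro h hh
    rw [htt] at hh
    obtain ⟨r, hr⟩ := hh
    have hex : ∃ r, tt r = h := ⟨r, hr⟩
    simp only [hρdef, dif_pos hex]
    exact Classical.choose_spec hex
  -- refinements of the covers along the enumeration
  set 𝒱 : ℕ → Set (Set X) := fun m => refCov (fun r => cov (tt r)) m with h𝒱def
  have h𝒱mem : ∀ m, 𝒱 m ∈ KCovers X := fun m => refCov_mem (fun r => hcov3 (tt r)) m
  obtain ⟨G, hG, hev⟩ := sfin_to_KH hs 𝒱 h𝒱mem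
  set w : ℕ → Set X → ℕ → Set X := fun m V r =>
    if h : V ∈ 𝒱 m then Classical.choose h.2 r else ∅ with hwdef
  have hw : ∀ m V, V ∈ 𝒱 m → ∀ r ≤ m, w m V r ∈ cov (tt r) ∧ V ⊆ w m V r := by
    intro m V hV r hr
    have hspec := Classical.choose_spec hV.2
    simp only [hwdef, dif_pos hV]
    refine ⟨hspec.1 r hr, ?_⟩
    intro x hx
    rw [hspec.2] at hx
    exact Set.mem_iInter₂.mp hx r (Finset.mem_range.mpr (Nat.lt_succ_of_le hr))
  -- Two's play
  set mv : List (Set (Set X)) → ℕ → Set (Set X) := fun h c =>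
    (fun V => w c V (ρ h)) '' (G c) with hmvdef
  set st : ℕ → List (Set (Set X)) × ℕ := fun n =>
    Nat.rec (motive := fun _ => List (Set (Set X)) × ℕ) ([], ρ [])
      (fun _ p => (p.1 ++ [mv p.1 p.2], max (ρ (p.1 ++ [mv p.1 p.2])) (p.2 + 1))) n
    with hstdef
  set F : ℕ → Set (Set X) := fun n => mv (st n).1 (st n).2 with hFdef
  have hstS : ∀ n, st (n + 1) =
      ((st n).1 ++ [F n], max (ρ ((st n).1 ++ [F n])) ((st n).2 + 1)) := fun n => rfl
  have hFim : ∀ n, F n = (fun V => w (st n).2 V (ρ (st n).1)) '' (G (st n).2) := fun n => rfl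
  have hinv : ∀ n, (st n).1 ∈ ℒ ∧ ρ ((st n).1) ≤ (st n).2 ∧ n ≤ (st n).2 ∧
      (st n).1 = List.ofFn (fun i : Fin n => F i) := by
    intro n
    induction n with
    | zero =>
      refine ⟨hℒne, le_rfl, Nat.zero_le _, ?_⟩
      rw [List.ofFn_zero, hstdef]
      rfl
    | succ n ih =>
      obtain ⟨h1, h2, h3, h4⟩ := ih
      have hFsub : F n ⊆ cov ((st n).1) := by
        rw [hFim]
        rintro x ⟨V, hV, rfl⟩
        have hVm : V ∈ 𝒱 ((st n).2) := (hG _).1 hV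
        have := (hw _ V hVm (ρ ((st n).1)) h2).1
        rwa [hρ _ h1] at this
      have hFfin : (F n).Finite := Set.Finite.image _ (hG _).2
      have hmem : (st n).1 ++ [F n] ∈ ℒ := hℒext _ h1 _ hFsub hFfin
      refine ⟨by rw [hstS]; exact hmem, by rw [hstS]; exact le_max_left _ _,
        by rw [hstS]; simp only []; have := le_max_right (ρ ((st n).1 ++ [F n])) ((st n).2 + 1); omega, ?_⟩
      rw [hstS]
      simp only []
      rw [h4, ofFn_snoc]
  have hFsubσ : ∀ n, F n ⊆ σ (List.ofFn (fun i : Fin n => F i)) := by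
    intro n
    obtain ⟨h1, h2, _, h4⟩ := hinv n
    rw [← h4]
    have hFsub : F n ⊆ cov ((st n).1) := by
      rw [hFim]
      rintro x ⟨V, hV, rfl⟩
      have hVm : V ∈ 𝒱 ((st n).2) := (hG _).1 hV
      have := (hw _ V hVm (ρ ((st n).1)) h2).1
      rwa [hρ _ h1] at this
    exact hFsub.trans (hcov1 _)
  have hFfin : ∀ n, (F n).Finite := fun n => Set.Finite.image _ (hG _).2
  -- Two's union is a k-cover
  set Y : Set (Set X) := ⋃ n, F n with hYdef
  have hYleg : ∀ U ∈ Y, Leg X U := by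
    intro U hU
    obtain ⟨n, hn⟩ := Set.mem_iUnion.mp hU
    obtain ⟨h1, h2, _, _⟩ := hinv n
    rw [hFim] at hn
    obtain ⟨V, hV, rfl⟩ := hn
    have hVm : V ∈ 𝒱 ((st n).2) := (hG _).1 hV
    have hmem := (hw _ V hVm (ρ ((st n).1)) h2).1
    exact kcovers_leg (hcov3 _) _ hmem
  have hYK : Y ∈ KCovers X := by
    apply kcovers_mk hYleg
    intro K hK hKne
    obtain ⟨M, hM⟩ := hev K hK hKne
    obtain ⟨h1, h2, h3, _⟩ := hinv M
    obtain ⟨V, hV, hKV⟩ := hM ((st M).2) h3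
    refine ⟨w ((st M).2) V (ρ ((st M).1)), Set.mem_iUnion.mpr ⟨M, ?_⟩, ?_⟩
    · rw [hFim]; exact ⟨V, hV, rfl⟩
    · exact hKV.trans (hw _ V ((hG _).1 hV) (ρ ((st M).1)) h2).2
  have hYcnt : Y.Countable := Set.countable_iUnion (fun n => (hFfin n).countable)
  obtain ⟨C, hC1, _, hC3⟩ := exists_countable_gp_subcover hs hYK
  have hYgp : Y ∈ groupables (KCovers X) := groupables_superset hYcnt hYleg hC1 hC3
  exact hwin F (fun n => ⟨hFfin n, hFsubσ n⟩) hYgp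

/-- If One has no winning strategy then `S_fin(𝒦,𝒦ᵍᵖ)` holds. -/
theorem not_onewins_to_sfin
    (h : ¬ OneWinsGfin (KCovers X) (groupables (KCovers X))) :
    Sfin (KCovers X) (groupables (KCovers X)) := by
  by_contra hs
  apply h
  rw [Sfin] at hs
  push_neg at hs
  obtain ⟨𝒰, h𝒰, hbad⟩ := hs
  refine ⟨fun s => 𝒰 s.length, fun s => h𝒰 _, ?_⟩
  intro F hF
  apply hbad
  intro n
  refine ⟨?_, (hF n).1⟩
  have hl := (hF n).2
  simpa [List.length_ofFn] using hl
end S16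

namespace S16

open Classical

variable {X : Type u} [TopologicalSpace X]

def Mset (K : Set X) (U : Set ℝ) : Set (Ck X) := {f : Ck X | ∀ x ∈ K, f.1 x ∈ U}

lemma isOpen_Mset {K : Set X} {U : Set ℝ} (hK : IsCompact K) (hU : IsOpen U) :
    IsOpen (Mset K U) :=
  TopologicalSpace.isOpen_generateFrom_of_mem ⟨K, U, hK, hU, rfl⟩

/-- Uniform balls around `g` over `K`. -/
def Bset (K : Set X) (δ : ℝ) (g : Ck X) : Set (Ck X) :=
  {f : Ck X | ∀ x ∈ K, |f.1 x - g.1 x| < δ}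

lemma exists_open_uniform (g : Ck X) {K : Set X} (hK : IsCompact K) {δ : ℝ} (hδ : 0 < δ) :
    ∃ O : Set (Ck X), IsOpen O ∧ g ∈ O ∧ O ⊆ Bset K δ g := by
  set V : X → Set X := fun x => {y | |g.1 y - g.1 x| < δ / 4} with hVdef
  have hgc : ∀ x : X, Continuous fun y => |g.1 y - g.1 x| :=
    fun x => (g.2.sub continuous_const).abs
  have hVopen : ∀ x, IsOpen (V x) := fun x => isOpen_lt (hgc x) continuous_const
  have hcover : K ⊆ ⋃ x : K, V x := by
    intro y hy
    refine Set.mem_iUnion.mpr ⟨⟨y, hy⟩, ?_⟩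
    simp only [hVdef, Set.mem_setOf_eq, sub_self, abs_zero]
    positivity
  obtain ⟨tF, htF⟩ := hK.elim_finite_subcover (fun x : K => V x) (fun x => hVopen x) hcover
  set Kc : K → Set X := fun x => K ∩ {y | |g.1 y - g.1 x| ≤ δ / 4} with hKcdef
  have hKcComp : ∀ x : K, IsCompact (Kc x) :=
    fun x => hK.inter_right (isClosed_le (hgc x) continuous_const)
  set O : Set (Ck X) := ⋂ x ∈ tF, Mset (Kc x) (Metric.ball (g.1 x) (δ / 2)) with hOdef
  refine ⟨O, ?_, ?_, ?_⟩
  · exact isOpen_biInter_finset (fun x _ => isOpen_Mset (hKcComp x) Metric.isOpen_ball)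
  · refine Set.mem_iInter₂.mpr (fun x _ => ?_)
    intro y hy
    have h1 : |g.1 y - g.1 x| ≤ δ / 4 := hy.2
    rw [Metric.mem_ball, Real.dist_eq]
    linarith
  · intro f hf y hy
    obtain ⟨x, hxF, hyV⟩ : ∃ x ∈ tF, y ∈ V x := by
      have := htF hy
      simpa using this
    have hyKc : y ∈ Kc x := ⟨hy, show |g.1 y - g.1 ↑x| ≤ δ / 4 from le_of_lt hyV⟩
    have h2 := Set.mem_iInter₂.mp hf x hxF y hyKc
    rw [Metric.mem_ball, Real.dist_eq] at h2
    have h3 : |g.1 y - g.1 x| < δ / 4 := hyV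
    calc |f.1 y - g.1 y| ≤ |f.1 y - g.1 ↑x| + |g.1 ↑x - g.1 y| := abs_sub_le _ _ _
      _ = |f.1 y - g.1 ↑x| + |g.1 y - g.1 ↑x| := by rw [abs_sub_comm (g.1 ↑x)]
      _ < δ / 2 + δ / 4 := by linarith
      _ < δ := by linarith

lemma nbhd_basis {O : Set (Ck X)} (hO : IsOpen O) :
    ∀ g ∈ O, ∃ (K : Set X) (δ : ℝ), IsCompact K ∧ 0 < δ ∧ Bset K δ g ⊆ O := by
  have hO' : TopologicalSpace.GenerateOpen
      {S | ∃ (K : Set X) (U : Set ℝ), IsCompact K ∧ IsOpen U ∧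
        S = {f : Ck X | ∀ x ∈ K, f.1 x ∈ U}} O := hO
  clear hO
  induction hO' with
  | @basic s hs =>
    obtain ⟨K, U, hK, hU, rfl⟩ := hs
    intro g hg
    by_cases hKne : K = ∅
    · subst hKne
      exact ⟨∅, 1, isCompact_empty, one_pos, fun f _ x hx => absurd hx (Set.notMem_empty x)⟩
    have hball : ∀ x : X, ∃ ε : ℝ, 0 < ε ∧ (x ∈ K → Metric.ball (g.1 x) (2 * ε) ⊆ U) := by
      intro x
      by_cases hx : x ∈ K
      · obtain ⟨ε, hε, hsub⟩ := Metric.isOpen_iff.mp hU (g.1 x) (hg x hx)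
        refine ⟨ε / 2, by positivity, fun _ => ?_⟩
        have h2 : 2 * (ε / 2) = ε := by ring
        rw [h2]
        exact hsub
      · exact ⟨1, one_pos, fun h => absurd h hx⟩
    choose ε hε1 hε2 using hball
    set W : X → Set X := fun x => {y | |g.1 y - g.1 x| < ε x} with hWdef
    have hWopen : ∀ x, IsOpen (W x) :=
      fun x => isOpen_lt ((g.2.sub continuous_const).abs) continuous_const
    have hcover : K ⊆ ⋃ x : K, W x := by
      intro y hy
      refine Set.mem_iUnion.mpr ⟨⟨y, hy⟩, ?_⟩
      simp only [hWdef, Set.mem_setOf_eq, sub_self, abs_zero]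
      exact hε1 y
    obtain ⟨tF, htF⟩ := hK.elim_finite_subcover (fun x : K => W x) (fun x => hWopen x) hcover
    have htFne : tF.Nonempty := by
      by_contra hc
      rw [Finset.not_nonempty_iff_eq_empty] at hc
      obtain ⟨y, hy⟩ := Set.nonempty_iff_ne_empty.mpr hKne
      have := htF hy
      simp [hc] at this
    set δ : ℝ := tF.inf' htFne (fun x => ε x) with hδdef
    have hδpos : 0 < δ := by
      rw [hδdef, Finset.lt_inf'_iff]
      exact fun x _ => hε1 x
    refine ⟨K, δ, hK, hδpos, ?_⟩
    intro f hf y hy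
    obtain ⟨x, hxF, hyW⟩ : ∃ x ∈ tF, y ∈ W x := by
      have := htF hy
      simpa using this
    have h1 : |f.1 y - g.1 y| < δ := hf y hy
    have h2 : |g.1 y - g.1 ↑x| < ε ↑x := hyW
    have h3 : δ ≤ ε ↑x := Finset.inf'_le _ hxF
    have h4 : f.1 y ∈ Metric.ball (g.1 ↑x) (2 * ε ↑x) := by
      rw [Metric.mem_ball, Real.dist_eq]
      calc |f.1 y - g.1 ↑x| ≤ |f.1 y - g.1 y| + |g.1 y - g.1 ↑x| := abs_sub_le _ _ _
        _ < δ + ε ↑x := by linarith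
        _ ≤ 2 * ε ↑x := by linarith
    exact hε2 ↑x x.2 h4
  | univ =>
    intro g _
    exact ⟨∅, 1, isCompact_empty, one_pos, fun f _ => trivial⟩
  | inter s t _ _ ihs iht =>
    intro g hg
    obtain ⟨K1, δ1, h1, h2, h3⟩ := ihs g hg.1
    obtain ⟨K2, δ2, h4, h5, h6⟩ := iht g hg.2
    refine ⟨K1 ∪ K2, min δ1 δ2, h1.union h4, lt_min h2 h5, fun f hf => ⟨?_, ?_⟩⟩
    · exact h3 (fun x hx => lt_of_lt_of_le (hf x (Set.mem_union_left _ hx)) (min_le_left _ _))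
    · exact h6 (fun x hx => lt_of_lt_of_le (hf x (Set.mem_union_right _ hx)) (min_le_right _ _))
  | sUnion S _ ih =>
    intro g hg
    obtain ⟨s, hsS, hgs⟩ := hg
    obtain ⟨K, δ, h1, h2, h3⟩ := ih s hsS g hgs
    exact ⟨K, δ, h1, h2, fun f hf => ⟨s, hsS, h3 hf⟩⟩

lemma mem_closure_iff_small {A : Set (Ck X)} {g : Ck X} :
    g ∈ closure A ↔ ∀ (K : Set X), IsCompact K → ∀ δ : ℝ, 0 < δ →
      ∃ f ∈ A, ∀ x ∈ K, |f.1 x - g.1 x| < δ := by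
  constructor
  · intro h K hK δ hδ
    obtain ⟨O, hO, hgO, hOsub⟩ := exists_open_uniform g hK hδ
    obtain ⟨f, hfO, hfA⟩ := mem_closure_iff.mp h O hO hgO
    exact ⟨f, hfA, fun x hx => hOsub hfO x hx⟩
  · intro h
    rw [mem_closure_iff]
    intro O hO hgO
    obtain ⟨K, δ, hK, hδ, hsub⟩ := nbhd_basis hO g hgO
    obtain ⟨f, hfA, hf⟩ := h K hK δ hδ
    exact ⟨f, hsub (fun x hx => hf x hx), hfA⟩

lemma zero_mem_closure_iff {A : Set (Ck X)} :
    zeroCk X ∈ closure A ↔ ∀ (K : Set X), IsCompact K → ∀ δ : ℝ, 0 < δ →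
      ∃ f ∈ A, ∀ x ∈ K, |f.1 x| < δ := by
  rw [mem_closure_iff_small]
  constructor
  · intro h K hK δ hδ
    obtain ⟨f, hfA, hf⟩ := h K hK δ hδ
    refine ⟨f, hfA, fun x hx => ?_⟩
    have := hf x hx
    simpa [zeroCk] using this
  · intro h K hK δ hδ
    obtain ⟨f, hfA, hf⟩ := h K hK δ hδ
    refine ⟨f, hfA, fun x hx => ?_⟩
    have := hf x hx
    simpa [zeroCk] using this

lemma ck_ne_zero_exists {f : Ck X} (h : f ≠ zeroCk X) : ∃ x, f.1 x ≠ 0 := by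
  by_contra hc
  push_neg at hc
  exact h (Subtype.ext (funext hc))

/-- The witnesses of smallness on a compact set are infinite. -/
lemma small_witnesses_infinite [Nonempty X] {A : Set (Ck X)} (hcl : zeroCk X ∈ closure A)
    (h0 : zeroCk X ∉ A) {K : Set X} (hK : IsCompact K) {δ : ℝ} (hδ : 0 < δ) :
    {f ∈ A | ∀ x ∈ K, |f.1 x| < δ}.Infinite := by
  by_contra hninf
  rw [Set.not_infinite] at hninf
  set S := {f ∈ A | ∀ x ∈ K, |f.1 x| < δ} with hSdef
  have hesc : ∀ f : Ck X, ∃ x : X, f ∈ S → f.1 x ≠ 0 := by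
    intro f
    by_cases hf : f ∈ S
    · have hne : f ≠ zeroCk X := fun h => h0 (h ▸ hf.1)
      obtain ⟨x, hx⟩ := ck_ne_zero_exists hne
      exact ⟨x, fun _ => hx⟩
    · exact ⟨Classical.arbitrary X, fun h => absurd h hf⟩
  choose xp hxp using hesc
  have hK' : IsCompact (K ∪ xp '' S) := hK.union (hninf.image xp).isCompact
  by_cases hSne : S.Nonempty
  · set tS := hninf.toFinset with htSdef
    have htSne : tS.Nonempty := by
      rwa [htSdef, Set.Finite.toFinset_nonempty]
    set m : ℝ := tS.inf' htSne (fun f => |f.1 (xp f)|) with hmdef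
    have hmpos : 0 < m := by
      rw [hmdef, Finset.lt_inf'_iff]
      intro f hf
      rw [Set.Finite.mem_toFinset] at hf
      exact abs_pos.mpr (hxp f hf)
    obtain ⟨f, hfA, hf⟩ := zero_mem_closure_iff.mp hcl (K ∪ xp '' S) hK'
      (min δ m) (lt_min hδ hmpos)
    have hfS : f ∈ S := ⟨hfA, fun x hx =>
      lt_of_lt_of_le (hf x (Set.mem_union_left _ hx)) (min_le_left _ _)⟩
    have h1 : |f.1 (xp f)| < min δ m :=
      hf (xp f) (Set.mem_union_right _ ⟨f, hfS, rfl⟩)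
    have h2 : m ≤ |f.1 (xp f)| :=
      Finset.inf'_le _ ((Set.Finite.mem_toFinset _).mpr hfS)
    have := lt_of_lt_of_le h1 (min_le_right _ _)
    linarith
  · obtain ⟨f, hfA, hf⟩ := zero_mem_closure_iff.mp hcl K hK δ hδ
    exact hSne ⟨f, hfA, hf⟩

end S16

namespace S16

open Classical

variable {X : Type u} [TopologicalSpace X]

/-- Urysohn-type separation for compact sets in completely regular spaces. -/
lemma urysohn_compact [CompletelyRegularSpace X] {K U : Set X} (hK : IsCompact K)
    (hU : IsOpen U) (hKU : K ⊆ U) :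
    ∃ f : X → ℝ, Continuous f ∧ (∀ x ∈ K, f x = 0) ∧ (∀ x ∉ U, f x = 1) ∧
      ∀ x, f x ∈ Set.Icc (0 : ℝ) 1 := by
  by_cases hKne : K = ∅
  · subst hKne
    exact ⟨fun _ => 1, continuous_const, fun x hx => absurd hx (Set.notMem_empty x),
      fun _ _ => rfl, fun _ => ⟨zero_le_one, le_rfl⟩⟩
  have hpt : ∀ x : X, ∃ f : X → ℝ, Continuous f ∧ (x ∈ K → f x = 0) ∧
      (∀ y ∉ U, f y = 1) ∧ ∀ y, f y ∈ Set.Icc (0 : ℝ) 1 := by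
    intro x
    by_cases hx : x ∈ K
    · obtain ⟨f, hf, hfx, hfU⟩ := CompletelyRegularSpace.completely_regular x Uᶜ
        hU.isClosed_compl (fun h => h (hKU hx))
      refine ⟨fun y => ((f y : ℝ)), continuous_subtype_val.comp hf, fun _ => ?_, ?_, ?_⟩
      · dsimp only
        rw [hfx]; rfl
      · intro y hy
        have h1 : f y = 1 := hfU (show y ∈ Uᶜ from hy)
        dsimp only
        rw [h1]; rfl
      · intro y; exact (f y).2
    · exact ⟨fun _ => 1, continuous_const, fun h => absurd h hx, fun _ _ => rfl,
        fun _ => ⟨zero_le_one, le_rfl⟩⟩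
  choose fp hfc hf0 hf1 hfI using hpt
  set V : X → Set X := fun x => {y | fp x y < 1 / 2} with hVdef
  have hVopen : ∀ x, IsOpen (V x) := fun x => isOpen_lt (hfc x) continuous_const
  have hcover : K ⊆ ⋃ x : K, V x := by
    intro y hy
    refine Set.mem_iUnion.mpr ⟨⟨y, hy⟩, ?_⟩
    simp only [hVdef, Set.mem_setOf_eq]
    rw [hf0 y hy]
    norm_num
  obtain ⟨tF, htF⟩ := hK.elim_finite_subcover (fun x : K => V x) (fun x => hVopen x) hcover
  have htFne : tF.Nonempty := by
    by_contra hc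
    rw [Finset.not_nonempty_iff_eq_empty] at hc
    obtain ⟨y, hy⟩ := Set.nonempty_iff_ne_empty.mpr hKne
    have := htF hy
    simp [hc] at this
  set g : X → ℝ := fun y => tF.inf' htFne (fun x => fp x y) with hgdef
  have hgc : Continuous g := by
    have h1 : g = tF.inf' htFne (fun x => fp ↑x) := by
      funext y
      rw [hgdef, Finset.inf'_apply]
    rw [h1]
    exact Continuous.finset_inf' htFne (fun i _ => hfc ↑i)
  have hgK : ∀ y ∈ K, g y < 1 / 2 := by
    intro y hy
    obtain ⟨x, hxF, hyV⟩ : ∃ x ∈ tF, y ∈ V x := by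
      have := htF hy
      simpa using this
    calc g y ≤ fp ↑x y := Finset.inf'_le _ hxF
      _ < 1 / 2 := hyV
  have hgU : ∀ y ∉ U, g y = 1 := by
    intro y hy
    apply le_antisymm
    · obtain ⟨x, hx⟩ := htFne
      calc g y ≤ fp ↑x y := Finset.inf'_le _ hx
        _ = 1 := hf1 ↑x y hy
    · apply Finset.le_inf'
      intro x _
      rw [hf1 ↑x y hy]
  have hg0 : ∀ y, 0 ≤ g y := by
    intro y
    apply Finset.le_inf'
    intro x _
    exact (hfI ↑x y).1
  have hg1 : ∀ y, g y ≤ 1 := by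
    intro y
    obtain ⟨x, hx⟩ := htFne
    calc g y ≤ fp ↑x y := Finset.inf'_le _ hx
      _ ≤ 1 := (hfI ↑x y).2
  refine ⟨fun y => max 0 (2 * g y - 1), continuous_const.max
    ((continuous_const.mul hgc).sub continuous_const), ?_, ?_, ?_⟩
  · intro y hy
    have := hgK y hy
    apply max_eq_left
    linarith
  · intro y hy
    have h1 := hgU y hy
    dsimp only
    rw [h1]
    norm_num
  · intro y
    constructor
    · exact le_max_left _ _
    · have := hg1 y
      apply max_le (by norm_num)
      linarith

end S16

namespace S16

open Classical

variable {X : Type u} [TopologicalSpace X]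

/-- Translation on `Ck`. -/
def trCk (g : Ck X) : Ck X → Ck X := fun f => ⟨fun x => f.1 x + g.1 x, f.2.add g.2⟩

/-- Negation on `Ck`. -/
def negCk (g : Ck X) : Ck X := ⟨fun x => -g.1 x, g.2.neg⟩

lemma trCk_cancel1 (y f : Ck X) : trCk y (trCk (negCk y) f) = f := by
  apply Subtype.ext
  funext x
  show f.1 x + -y.1 x + y.1 x = f.1 x
  ring

lemma trCk_cancel2 (y f : Ck X) : trCk (negCk y) (trCk y f) = f := by
  apply Subtype.ext
  funext x
  show f.1 x + y.1 x + -y.1 x = f.1 x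
  ring

lemma trCk_zero (y : Ck X) : trCk y (zeroCk X) = y := by
  apply Subtype.ext
  funext x
  show (0 : ℝ) + y.1 x = y.1 x
  ring

lemma trCk_neg_self (y : Ck X) : trCk (negCk y) y = zeroCk X := by
  apply Subtype.ext
  funext x
  show y.1 x + -y.1 x = (0 : ℝ)
  ring

lemma trCk_image_image (y : Ck X) (B : Set (Ck X)) :
    trCk y '' (trCk (negCk y) '' B) = B := by
  ext x
  constructor
  · rintro ⟨x', ⟨a, ha, rfl⟩, rfl⟩
    rwa [trCk_cancel1]
  · intro hx
    exact ⟨trCk (negCk y) x, ⟨x, hx, rfl⟩, trCk_cancel1 y x⟩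

lemma trCk_image_image' (y : Ck X) (B : Set (Ck X)) :
    trCk (negCk y) '' (trCk y '' B) = B := by
  ext x
  constructor
  · rintro ⟨x', ⟨a, ha, rfl⟩, rfl⟩
    rwa [trCk_cancel2]
  · intro hx
    exact ⟨trCk y x, ⟨x, hx, rfl⟩, trCk_cancel2 y x⟩

/-- Translations are continuous on `Ck`. -/
lemma trCk_continuous (g : Ck X) : Continuous (trCk g) := by
  rw [continuous_def]
  intro s hs
  have hs' : TopologicalSpace.GenerateOpen
      {S | ∃ (K : Set X) (U : Set ℝ), IsCompact K ∧ IsOpen U ∧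
        S = {f : Ck X | ∀ x ∈ K, f.1 x ∈ U}} s := hs
  clear hs
  induction hs' with
  | @basic s hsb =>
    obtain ⟨K, U, hK, hU, rfl⟩ := hsb
    rw [isOpen_iff_forall_mem_open]
    intro f₀ hf₀
    have hf₀' : ∀ x ∈ K, f₀.1 x + g.1 x ∈ U := hf₀
    have hball : ∀ x : X, ∃ ε : ℝ, 0 < ε ∧
        (x ∈ K → Metric.ball (f₀.1 x + g.1 x) (2 * ε) ⊆ U) := by
      intro x
      by_cases hx : x ∈ K
      · obtain ⟨ε, hε, hsub⟩ := Metric.isOpen_iff.mp hU _ (hf₀' x hx)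
        refine ⟨ε / 2, by positivity, fun _ => ?_⟩
        have he : 2 * (ε / 2) = ε := by ring
        rw [he]
        exact hsub
      · exact ⟨1, one_pos, fun h => absurd h hx⟩
    choose ε hε1 hε2 using hball
    set W : X → Set X := fun x =>
      {y | |g.1 y - g.1 x| < ε x / 2 ∧ |f₀.1 y - f₀.1 x| < ε x / 2} with hWdef
    have hWopen : ∀ x, IsOpen (W x) := by
      intro x
      apply IsOpen.inter
      · exact isOpen_lt ((g.2.sub continuous_const).abs) continuous_const
      · exact isOpen_lt ((f₀.2.sub continuous_const).abs) continuous_const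
    have hcover : K ⊆ ⋃ x : K, W x := by
      intro y hy
      refine Set.mem_iUnion.mpr ⟨⟨y, hy⟩, ?_, ?_⟩ <;>
        · simp only [sub_self, abs_zero]
          exact div_pos (hε1 _) two_pos
    obtain ⟨tF, htF⟩ := hK.elim_finite_subcover (fun x : K => W x) (fun x => hWopen x) hcover
    set Kc : K → Set X := fun x =>
      K ∩ {y | |g.1 y - g.1 ↑x| ≤ ε ↑x / 2 ∧ |f₀.1 y - f₀.1 ↑x| ≤ ε ↑x / 2} with hKcdef
    have hKcComp : ∀ x : K, IsCompact (Kc x) := by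
      intro x
      apply hK.inter_right
      apply IsClosed.inter
      · exact isClosed_le ((g.2.sub continuous_const).abs) continuous_const
      · exact isClosed_le ((f₀.2.sub continuous_const).abs) continuous_const
    refine ⟨⋂ x ∈ tF, Mset (Kc x) (Metric.ball (f₀.1 ↑x) (ε ↑x)), ?_, ?_, ?_⟩
    · intro f hf y hy
      obtain ⟨x, hxF, hyW⟩ : ∃ x ∈ tF, y ∈ W x := by
        have := htF hy
        simpa using this
      have hyKc : y ∈ Kc x := ⟨hy, le_of_lt hyW.1, le_of_lt hyW.2⟩
      have h2 := Set.mem_iInter₂.mp hf x hxF y hyKc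
      rw [Metric.mem_ball, Real.dist_eq] at h2
      have h3 : |g.1 y - g.1 ↑x| < ε ↑x / 2 := hyW.1
      show f.1 y + g.1 y ∈ U
      apply hε2 ↑x x.2
      rw [Metric.mem_ball, Real.dist_eq]
      have he : f.1 y + g.1 y - (f₀.1 ↑x + g.1 ↑x) = (f.1 y - f₀.1 ↑x) + (g.1 y - g.1 ↑x) := by
        ring
      rw [he]
      calc |(f.1 y - f₀.1 ↑x) + (g.1 y - g.1 ↑x)| ≤
            |f.1 y - f₀.1 ↑x| + |g.1 y - g.1 ↑x| := abs_add_le _ _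
        _ < ε ↑x + ε ↑x / 2 := by linarith
        _ < 2 * ε ↑x := by linarith [hε1 (↑x : X)]
    · exact isOpen_biInter_finset (fun x _ => isOpen_Mset (hKcComp x) Metric.isOpen_ball)
    · refine Set.mem_iInter₂.mpr (fun x _ => ?_)
      intro y hy
      rw [Metric.mem_ball, Real.dist_eq]
      have := hy.2.2
      have hpos := hε1 (↑x : X)
      calc |f₀.1 y - f₀.1 ↑x| ≤ ε ↑x / 2 := hy.2.2
        _ < ε ↑x := by linarith
  | univ => simpa using isOpen_univ
  | inter s t _ _ ihs iht =>
    rw [Set.preimage_inter]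
    exact ihs.inter iht
  | sUnion S _ ih =>
    rw [Set.preimage_sUnion]
    exact isOpen_biUnion ih

/-- Transfer of `Ω`-membership under translation. -/
lemma omegaPt_translate {y : Ck X} {A : Set (Ck X)} (hA : A ∈ OmegaPt (Ck X) y) :
    trCk (negCk y) '' A ∈ OmegaPt (Ck X) (zeroCk X) := by
  constructor
  · have h1 : trCk (negCk y) y ∈ closure (trCk (negCk y) '' A) :=
      map_mem_closure (trCk_continuous _) hA.1 (Set.mapsTo_image _ _)
    rwa [trCk_neg_self] at h1
  · rintro ⟨a, ha, hae⟩
    apply hA.2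
    have h1 : trCk y (trCk (negCk y) a) = trCk y (zeroCk X) := by rw [hae]
    rw [trCk_cancel1, trCk_zero] at h1
    rwa [h1] at ha

lemma omegaPt_translate' {y : Ck X} {B : Set (Ck X)} (hB : B ∈ OmegaPt (Ck X) (zeroCk X)) :
    trCk y '' B ∈ OmegaPt (Ck X) y := by
  constructor
  · have h1 : trCk y (zeroCk X) ∈ closure (trCk y '' B) :=
      map_mem_closure (trCk_continuous _) hB.1 (Set.mapsTo_image _ _)
    rwa [trCk_zero] at h1
  · rintro ⟨a, ha, hae⟩
    apply hB.2
    have h1 : trCk (negCk y) (trCk y a) = trCk (negCk y) y := by rw [hae]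
    rw [trCk_cancel2, trCk_neg_self] at h1
    rwa [h1] at ha

lemma sep_image (y : Ck X) (A : Set (Ck X)) (P : Ck X → Prop) :
    {x ∈ A | P (trCk (negCk y) x)} = trCk y '' {x ∈ trCk (negCk y) '' A | P x} := by
  ext x
  constructor
  · rintro ⟨hxA, hP⟩
    exact ⟨trCk (negCk y) x, ⟨⟨x, hxA, rfl⟩, hP⟩, trCk_cancel1 y x⟩
  · rintro ⟨x', ⟨⟨a, haA, rfl⟩, hP⟩, rfl⟩
    rw [trCk_cancel1]
    exact ⟨haA, hP⟩

end S16

namespace S16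

open Classical

variable {X : Type u} [TopologicalSpace X]

lemma omega_superset {Y : Type u} [TopologicalSpace Y] {y : Y} {A B : Set Y}
    (hBA : B ⊆ A) (hB : B ∈ OmegaPt Y y) (hyA : y ∉ A) : A ∈ OmegaPt Y y :=
  ⟨closure_mono hBA hB.1, hyA⟩

/-- Extension lemma on the Ω side. -/
lemma groupables_superset_omega {Y : Type u} [TopologicalSpace Y] {y : Y} {A B : Set Y}
    (hA : A.Countable) (hyA : y ∉ A) (hBA : B ⊆ A)
    (hB : B ∈ groupables (OmegaPt Y y)) : A ∈ groupables (OmegaPt Y y) := by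
  obtain ⟨hBΩ, φ, hfib, hJ⟩ := hB
  obtain ⟨e, he⟩ := Set.countable_iff_exists_injOn.mp hA
  refine ⟨omega_superset hBA hBΩ hyA, fun x => if x ∈ B then φ x else e x, ?_, ?_⟩
  · intro n
    have hss : {x ∈ A | (if x ∈ B then φ x else e x) = n} ⊆
        {x ∈ B | φ x = n} ∪ {x ∈ A \ B | e x = n} := by
      rintro x ⟨hxA, hx⟩
      by_cases hx' : x ∈ B
      · rw [if_pos hx'] at hx; exact Or.inl ⟨hx', hx⟩
      · rw [if_neg hx'] at hx; exact Or.inr ⟨⟨hxA, hx'⟩, hx⟩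
    refine Set.Finite.subset (Set.Finite.union (hfib n) ?_) hss
    apply Set.Subsingleton.finite
    rintro a ⟨ha, hae⟩ b ⟨hb, hbe⟩
    exact he ha.1 hb.1 (hae.trans hbe.symm)
  · intro J hJinf
    refine omega_superset ?_ (hJ J hJinf) ?_
    · rintro x ⟨hx, hφ⟩
      refine ⟨hBA hx, ?_⟩
      dsimp only
      rw [if_pos hx]
      exact hφ
    · intro hy
      exact hyA hy.1

/-- From `(iv)`, every countable member of `Ω₀` is groupable. -/
lemma four_groupable_at_zero
    (h4 : Sfin (OmegaPt (Ck X) (zeroCk X)) (groupables (OmegaPt (Ck X) (zeroCk X))))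
    {A : Set (Ck X)} (hA : A ∈ OmegaPt (Ck X) (zeroCk X)) (hAc : A.Countable) :
    Groupable (OmegaPt (Ck X) (zeroCk X)) A := by
  obtain ⟨B, hB, hgp⟩ := h4 (fun _ => A) (fun _ => hA)
  exact (groupables_superset_omega hAc hA.2 (Set.iUnion_subset fun n => (hB n).1) hgp).2

theorem four_to_three
    (h4 : Sfin (OmegaPt (Ck X) (zeroCk X)) (groupables (OmegaPt (Ck X) (zeroCk X)))) :
    Reznichenko (Ck X) ∧ CountableFanTightness (Ck X) := by
  constructor
  · intro y A hA hAc
    have hA' := omegaPt_translate hA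
    have hc' : (trCk (negCk y) '' A).Countable := hAc.image _
    obtain ⟨φ, hfib, hJ⟩ := four_groupable_at_zero h4 hA' hc'
    refine ⟨fun x => φ (trCk (negCk y) x), ?_, ?_⟩
    · intro n
      have heq := sep_image y A (fun x => φ x = n)
      rw [heq]
      exact (hfib n).image _
    · intro J hJinf
      have heq := sep_image y A (fun x => φ x ∈ J)
      rw [heq]
      exact omegaPt_translate' (hJ J hJinf)
  · intro y A hAmem
    have h0 : ∀ n, trCk (negCk y) '' A n ∈ OmegaPt (Ck X) (zeroCk X) :=
      fun n => omegaPt_translate (hAmem n)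
    obtain ⟨B, hB, hgp⟩ := h4 _ h0
    refine ⟨fun n => trCk y '' B n, fun n => ⟨?_, (hB n).2.image _⟩, ?_⟩
    · rintro x ⟨b, hb, rfl⟩
      obtain ⟨a, ha, rfl⟩ := (hB n).1 hb
      rw [trCk_cancel1]
      exact ha
    · have him : (⋃ n, trCk y '' B n) = trCk y '' (⋃ n, B n) := (Set.image_iUnion).symm
      rw [him]
      exact omegaPt_translate' hgp.1

theorem three_to_four (h3 : Reznichenko (Ck X) ∧ CountableFanTightness (Ck X)) :
    Sfin (OmegaPt (Ck X) (zeroCk X)) (groupables (OmegaPt (Ck X) (zeroCk X))) := by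
  intro A hA
  obtain ⟨B, hB, hU⟩ := h3.2 (zeroCk X) A hA
  have hcnt : (⋃ n, B n).Countable := Set.countable_iUnion (fun n => (hB n).2.countable)
  exact ⟨B, hB, hU, h3.1 (zeroCk X) _ hU hcnt⟩

end S16

namespace S16

open Classical

variable {X : Type u} [TopologicalSpace X]

theorem one_to_four [Nonempty X] (hs : Sfin (KCovers X) (groupables (KCovers X))) :
    Sfin (OmegaPt (Ck X) (zeroCk X)) (groupables (OmegaPt (Ck X) (zeroCk X))) := by
  intro A hA
  set P : ℕ → Ck X → Set X := fun n f => {x | |f.1 x| < 1 / ((n : ℝ) + 1)} with hPdef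
  have hPpos : ∀ n : ℕ, (0 : ℝ) < 1 / ((n : ℝ) + 1) := fun n => by positivity
  have hPopen : ∀ (n : ℕ) (f : Ck X), IsOpen (P n f) := fun n f =>
    isOpen_lt (f.2.abs) continuous_const
  have hA0 : ∀ n, zeroCk X ∉ A n := fun n => (hA n).2
  by_cases hD : {n : ℕ | ∃ f ∈ A n, ∀ x : X, |f.1 x| < 1 / ((n : ℝ) + 1)}.Infinite
  · -- degenerate case: uniformly small functions at infinitely many stages
    set D := {n : ℕ | ∃ f ∈ A n, ∀ x : X, |f.1 x| < 1 / ((n : ℝ) + 1)} with hDdef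
    have hwit : ∀ n : ℕ, ∃ f : Ck X, n ∈ D →
        (f ∈ A n ∧ ∀ x : X, |f.1 x| < 1 / ((n : ℝ) + 1)) := by
      intro n
      by_cases hn : n ∈ D
      · obtain ⟨f, h1, h2⟩ := hn
        exact ⟨f, fun _ => ⟨h1, h2⟩⟩
      · exact ⟨zeroCk X, fun h => absurd h hn⟩
    choose w hw using hwit
    set T : Set (Ck X) := {f | ∃ n ∈ D, w n = f} with hTdef
    have hT0 : zeroCk X ∉ T := by
      rintro ⟨n, hn, hwn⟩
      apply hA0 n
      have h1 := (hw n hn).1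
      rwa [hwn] at h1
    have hidx : ∀ f : Ck X, f ∈ T → {n | n ∈ D ∧ w n = f}.Finite := by
      intro f hf
      obtain ⟨n₀, hn₀, hwn₀⟩ := hf
      have hf0 : f ≠ zeroCk X := by
        intro h
        apply hA0 n₀
        have h1 := (hw n₀ hn₀).1
        rw [hwn₀, h] at h1
        exact h1
      obtain ⟨x₀, hx₀⟩ := ck_ne_zero_exists hf0
      have habs : 0 < |f.1 x₀| := abs_pos.mpr hx₀
      have hsub : {n | n ∈ D ∧ w n = f} ⊆ Set.Iic ⌈1 / |f.1 x₀|⌉₊ := by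
        rintro n ⟨hn, hwf⟩
        have h2 := (hw n hn).2 x₀
        rw [hwf] at h2
        have h3 : (n : ℝ) + 1 < 1 / |f.1 x₀| := by
          rw [lt_div_iff₀ habs]
          rw [lt_div_iff₀ (by positivity : (0:ℝ) < (n : ℝ) + 1)] at h2
          linarith
        have h4 : (n : ℝ) ≤ (⌈1 / |f.1 x₀|⌉₊ : ℝ) :=
          le_trans (by linarith) (Nat.le_ceil _)
        exact_mod_cast h4
      exact (Set.finite_Iic _).subset hsub
    have hTinf : T.Infinite := by
      intro hfin
      apply hD
      have hDsub : D ⊆ ⋃ f ∈ T, {n | n ∈ D ∧ w n = f} := by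
        intro n hn
        exact Set.mem_biUnion (show w n ∈ T from ⟨n, hn, rfl⟩) ⟨hn, rfl⟩
      exact (Set.Finite.biUnion hfin (fun f hf => hidx f hf)).subset hDsub
    have hlarge : ∀ T' ⊆ T, T'.Infinite → ∀ N : ℕ, ∃ f ∈ T', ∃ n ∈ D, N ≤ n ∧ w n = f := by
      intro T' hT'sub hT'inf N
      by_contra hc
      push_neg at hc
      have hsub : T' ⊆ w '' Set.Iio N := by
        intro f hf
        obtain ⟨n, hn, hwf⟩ := hT'sub hf
        rcases Nat.lt_or_ge n N with h | h
        · exact ⟨n, h, hwf⟩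
        · exact absurd hwf (hc f hf n hn h)
      exact hT'inf (((Set.finite_Iio N).image w).subset hsub)
    have hmemΩ : ∀ T' ⊆ T, T'.Infinite → T' ∈ OmegaPt (Ck X) (zeroCk X) := by
      intro T' hsub hinf
      constructor
      · rw [zero_mem_closure_iff]
        intro K hK δ hδ
        obtain ⟨N, hN⟩ := exists_nat_gt (1 / δ)
        obtain ⟨f, hf, n, hn, hNn, hwf⟩ := hlarge T' hsub hinf N
        refine ⟨f, hf, fun x _ => ?_⟩
        have h2 := (hw n hn).2 x
        rw [hwf] at h2
        have h5 : 1 / ((N : ℝ) + 1) < δ := by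
          rw [div_lt_iff₀ (by positivity : (0:ℝ) < (N : ℝ) + 1)]
          have h6 := (div_lt_iff₀ hδ).mp (lt_trans hN (lt_add_one _))
          linarith
        calc |f.1 x| < 1 / ((n : ℝ) + 1) := h2
          _ ≤ 1 / ((N : ℝ) + 1) := by
              apply one_div_le_one_div_of_le (by positivity)
              have : (N : ℝ) ≤ (n : ℝ) := by exact_mod_cast hNn
              linarith
          _ < δ := h5
      · intro h0T
        exact hT0 (hsub h0T)
    have hTc : T.Countable := by
      apply Set.Countable.mono ?_ (Set.countable_range w)
      rintro f ⟨n, _, hwf⟩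
      exact ⟨n, hwf⟩
    haveI hc1 : Countable ↥T := hTc.to_subtype
    haveI hc2 : Infinite ↥T := hTinf.to_subtype
    obtain ⟨dT⟩ := nonempty_denumerable_iff.mpr ⟨hc1, hc2⟩
    set q : ↥T ≃ ℕ := Denumerable.eqv ↥T with hqdef
    set φ : Ck X → ℕ := fun f => if h : f ∈ T then q ⟨f, h⟩ else 0 with hφdef
    have hφT : ∀ (f : Ck X) (hf : f ∈ T), φ f = q ⟨f, hf⟩ := by
      intro f hf
      simp only [hφdef, dif_pos hf]
    have hfib : ∀ n : ℕ, {x ∈ T | φ x = n}.Finite := by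
      intro n
      apply Set.Subsingleton.finite
      rintro a ⟨ha, hae⟩ b ⟨hb, hbe⟩
      rw [hφT a ha] at hae
      rw [hφT b hb] at hbe
      have : (⟨a, ha⟩ : ↥T) = ⟨b, hb⟩ := q.injective (hae.trans hbe.symm)
      exact congrArg Subtype.val this
    have hJcond : ∀ J : Set ℕ, J.Infinite → {x ∈ T | φ x ∈ J}.Infinite := by
      intro J hJ
      have hinj : Set.InjOn (fun j => (q.symm j : Ck X)) J := by
        intro a _ b _ hab
        have : q.symm a = q.symm b := Subtype.ext hab
        exact q.symm.injective this
      have him := hJ.image hinj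
      apply him.mono
      rintro f ⟨j, hj, rfl⟩
      refine ⟨(q.symm j).2, ?_⟩
      rw [hφT _ (q.symm j).2]
      have : (⟨(q.symm j : Ck X), (q.symm j).2⟩ : ↥T) = q.symm j := rfl
      rw [this, q.apply_symm_apply]
      exact hj
    set ℱ : ℕ → Set (Ck X) := fun n => if n ∈ D then {w n} else ∅ with hℱdef
    have hTeq : (⋃ n, ℱ n) = T := by
      ext f
      constructor
      · intro hf
        obtain ⟨n, hn⟩ := Set.mem_iUnion.mp hf
        by_cases h : n ∈ D
        · rw [hℱdef] at hn
          simp only [if_pos h, Set.mem_singleton_iff] at hn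
          exact ⟨n, h, hn.symm⟩
        · rw [hℱdef] at hn
          simp only [if_neg h] at hn
          exact absurd hn (Set.notMem_empty f)
      · rintro ⟨n, hn, hwf⟩
        refine Set.mem_iUnion.mpr ⟨n, ?_⟩
        rw [hℱdef]
        simp only [if_pos hn, Set.mem_singleton_iff]
        exact hwf.symm
    refine ⟨ℱ, ?_, ?_⟩
    · intro n
      constructor
      · intro f hf
        by_cases h : n ∈ D
        · rw [hℱdef] at hf
          simp only [if_pos h, Set.mem_singleton_iff] at hf
          rw [hf]
          exact (hw n h).1
        · rw [hℱdef] at hf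
          simp only [if_neg h] at hf
          exact absurd hf (Set.notMem_empty f)
      · by_cases h : n ∈ D
        · rw [hℱdef]; simp only [if_pos h]; exact Set.finite_singleton _
        · rw [hℱdef]; simp only [if_neg h]; exact Set.finite_empty
    · rw [hTeq]
      refine ⟨hmemΩ T subset_rfl hTinf, φ, hfib, ?_⟩
      intro J hJ
      exact hmemΩ _ (fun x hx => hx.1) (hJcond J hJ)
  · -- main case
    rw [Set.not_infinite] at hD
    obtain ⟨N₀, hN₀⟩ : ∃ N₀ : ℕ, ∀ n, N₀ ≤ n → ∀ f ∈ A n, ∃ x : X,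
        ¬ (|f.1 x| < 1 / ((n : ℝ) + 1)) := by
      obtain ⟨b, hb⟩ := hD.bddAbove
      refine ⟨b + 1, fun n hn f hf => ?_⟩
      by_contra hc
      push_neg at hc
      have hmem : n ∈ {n : ℕ | ∃ f ∈ A n, ∀ x : X, |f.1 x| < 1 / ((n : ℝ) + 1)} :=
        ⟨f, hf, fun x => hc x⟩
      have := hb hmem
      omega
    set 𝒰 : ℕ → Set (Set X) := fun k =>
      {V | V.Nonempty ∧ ∃ Fs : Finset (Ck X), ↑Fs ⊆ A (k + N₀) ∧ Fs.card = k + N₀ + 1 ∧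
        V = ⋂ f ∈ Fs, P (k + N₀) f} with h𝒰def
    have h𝒰mem : ∀ k, 𝒰 k ∈ KCovers X := by
      intro k
      apply kcovers_mk
      · rintro V ⟨hne, Fs, hFs1, hFs2, rfl⟩
        refine ⟨isOpen_biInter_finset (fun f _ => hPopen _ f), hne, ?_⟩
        obtain ⟨f₀, hf₀⟩ := Finset.card_pos.mp (by rw [hFs2]; omega)
        intro hEq
        obtain ⟨x, hx⟩ := hN₀ (k + N₀) (by omega) f₀ (hFs1 hf₀)
        have hxV : x ∈ ⋂ f ∈ Fs, P (k + N₀) f := by rw [hEq]; trivial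
        exact hx (Set.mem_iInter₂.mp hxV f₀ hf₀)
      · intro K hK hKne
        have hinf := small_witnesses_infinite (hA (k + N₀)).1 (hA (k + N₀)).2 hK
          (hPpos (k + N₀))
        obtain ⟨Fs, hFs1, hFs2⟩ := hinf.exists_subset_card_eq (k + N₀ + 1)
        refine ⟨⋂ f ∈ Fs, P (k + N₀) f, ⟨?_, Fs, fun f hf => (hFs1 hf).1, hFs2, rfl⟩, ?_⟩
        · obtain ⟨x, hx⟩ := hKne
          exact ⟨x, Set.mem_iInter₂.mpr (fun f hf => (hFs1 hf).2 x hx)⟩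
        · intro x hx
          exact Set.mem_iInter₂.mpr (fun f hf => (hFs1 hf).2 x hx)
    obtain ⟨G, hG, hev⟩ := sfin_to_KH hs 𝒰 h𝒰mem
    set FS : ℕ → Set X → Finset (Ck X) := fun k V =>
      if h : V ∈ 𝒰 k then Classical.choose h.2 else ∅ with hFSdef
    have hFS : ∀ k V, V ∈ 𝒰 k → ↑(FS k V) ⊆ A (k + N₀) ∧ (FS k V).card = k + N₀ + 1 ∧
        ∀ f ∈ FS k V, ∀ x ∈ V, x ∈ P (k + N₀) f := by
      intro k V hV
      have hspec := Classical.choose_spec hV.2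
      simp only [hFSdef, dif_pos hV]
      refine ⟨hspec.1, hspec.2.1, fun f hf x hx => ?_⟩
      rw [hspec.2.2] at hx
      exact Set.mem_iInter₂.mp hx f hf
    set Cnd : ℕ → Finset (Ck X) := fun k => ((hG k).2.toFinset).biUnion (fun V => FS k V)
      with hCnddef
    set Dd : ℕ → ℕ := fun k => (Cnd k).card with hDddef
    set t : ℕ → ℕ × ℕ := fun j => Nat.rec (motive := fun _ => ℕ × ℕ) (0, Dd 0)
      (fun _ p => (p.1 + 1 + p.2, p.2 + Dd (p.1 + 1 + p.2))) j with htdef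
    set sq : ℕ → ℕ := fun j => (t j).1 with hsqdef
    set Ssum : ℕ → ℕ := fun j => (t j).2 with hSdef
    have ht0 : t 0 = (0, Dd 0) := rfl
    have htS : ∀ j, t (j + 1) = ((t j).1 + 1 + (t j).2, (t j).2 + Dd ((t j).1 + 1 + (t j).2)) :=
      fun j => rfl
    have hsqS : ∀ j, sq (j + 1) = sq j + 1 + Ssum j := fun j => by
      simp only [hsqdef, hSdef, htS]
    have hSsumS : ∀ j, Ssum (j + 1) = Ssum j + Dd (sq (j + 1)) := fun j => by
      simp only [hsqdef, hSdef, htS]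
    have hsqmono : StrictMono sq := strictMono_nat_of_lt_succ (fun j => by
      rw [hsqS]; omega)
    have hsqge : ∀ j, j ≤ sq j := fun j => hsqmono.le_apply
    set Forb : ℕ → Finset (Ck X) := fun j => (Finset.range j).biUnion (fun i => Cnd (sq i))
      with hForbdef
    have hForbcard : ∀ j, (Forb (j + 1)).card ≤ Ssum j := by
      intro j
      induction j with
      | zero =>
        have h1 : Forb 1 = Cnd (sq 0) := by
          simp only [hForbdef, Finset.range_one, Finset.singleton_biUnion]
        rw [h1]
        have h2 : Ssum 0 = Dd (sq 0) := by
          simp only [hSdef, hsqdef, ht0]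
        exact le_of_eq h2.symm
      | succ j ih =>
        have hsplit : Forb (j + 2) ⊆ Forb (j + 1) ∪ Cnd (sq (j + 1)) := by
          intro x hx
          simp only [hForbdef, Finset.mem_biUnion, Finset.mem_range] at hx
          obtain ⟨i, hi, hxi⟩ := hx
          rcases Nat.lt_or_ge i (j + 1) with h | h
          · exact Finset.mem_union_left _ (by
              simp only [hForbdef, Finset.mem_biUnion, Finset.mem_range]
              exact ⟨i, h, hxi⟩)
          · have hij : i = j + 1 := by omega
            subst hij
            exact Finset.mem_union_right _ hxi
        calc (Forb (j + 2)).card ≤ (Forb (j + 1) ∪ Cnd (sq (j + 1))).card :=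
              Finset.card_le_card hsplit
          _ ≤ (Forb (j + 1)).card + (Cnd (sq (j + 1))).card := Finset.card_union_le _ _
          _ ≤ Ssum j + Dd (sq (j + 1)) := Nat.add_le_add ih le_rfl
          _ = Ssum (j + 1) := (hSsumS j).symm
    have hForblt : ∀ j, (Forb j).card < sq j + 1 := by
      intro j
      cases j with
      | zero => simp [hForbdef]
      | succ j =>
        have h1 := hForbcard j
        have h2 := hsqS j
        omega
    have hufresh : ∀ j, ∀ V ∈ G (sq j), ∃ f, f ∈ FS (sq j) V ∧ f ∉ Forb j := by
      intro j V hV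
      have hVr : V ∈ 𝒰 (sq j) := (hG (sq j)).1 hV
      have hcard := (hFS (sq j) V hVr).2.1
      have hne : (FS (sq j) V \ Forb j).Nonempty := by
        by_contra hc
        rw [Finset.not_nonempty_iff_eq_empty, Finset.sdiff_eq_empty_iff_subset] at hc
        have hle := Finset.card_le_card hc
        rw [hcard] at hle
        have := hForblt j
        omega
      obtain ⟨f, hf⟩ := hne
      rw [Finset.mem_sdiff] at hf
      exact ⟨f, hf.1, hf.2⟩
    set pk : ℕ → Set X → Ck X := fun j V =>
      if h : V ∈ G (sq j) then Classical.choose (hufresh j V h) else zeroCk X with hpkdef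
    have hpk : ∀ j, ∀ V, (hV : V ∈ G (sq j)) →
        pk j V ∈ FS (sq j) V ∧ pk j V ∉ Forb j := by
      intro j V hV
      have hspec := Classical.choose_spec (hufresh j V hV)
      simp only [hpkdef, dif_pos hV]
      exact hspec
    set B : ℕ → Set (Ck X) := fun j => (pk j) '' (G (sq j)) with hBdef
    have hBCnd : ∀ j, ∀ x ∈ B j, x ∈ Cnd (sq j) := by
      rintro j x ⟨V, hV, rfl⟩
      have hVt : V ∈ (hG (sq j)).2.toFinset := (Set.Finite.mem_toFinset _).mpr hV
      exact Finset.mem_biUnion.mpr ⟨V, hVt, (hpk j V hV).1⟩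
    have hBfin : ∀ j, (B j).Finite := fun j => Set.Finite.image _ (hG (sq j)).2
    have hBA : ∀ j, B j ⊆ A (sq j + N₀) := by
      rintro j x ⟨V, hV, rfl⟩
      have hVr : V ∈ 𝒰 (sq j) := (hG (sq j)).1 hV
      exact (hFS (sq j) V hVr).1 (hpk j V hV).1
    have hBsmall : ∀ j, ∀ V, (hV : V ∈ G (sq j)) → ∀ x ∈ V, x ∈ P (sq j + N₀) (pk j V) := by
      intro j V hV x hx
      have hVr : V ∈ 𝒰 (sq j) := (hG (sq j)).1 hV
      exact (hFS (sq j) V hVr).2.2 _ (hpk j V hV).1 x hx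
    have hsqN : StrictMono (fun j => sq j + N₀) := by
      intro a b hab
      have h1 := hsqmono hab
      dsimp only
      omega
    set ℱ : ℕ → Set (Ck X) := fun n =>
      if h : ∃ j, sq j + N₀ = n then B (Classical.choose h) else ∅ with hℱdef
    have hℱsq : ∀ j, ℱ (sq j + N₀) = B j := by
      intro j
      have h : ∃ j', sq j' + N₀ = sq j + N₀ := ⟨j, rfl⟩
      have hcj : Classical.choose h = j := hsqN.injective (Classical.choose_spec h)
      simp only [hℱdef, dif_pos h, hcj]
    have hℱsub : ∀ n, ℱ n ⊆ A n := by
      intro n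
      by_cases h : ∃ j, sq j + N₀ = n
      · have hcj := Classical.choose_spec h
        simp only [hℱdef, dif_pos h]
        have h1 : B (Classical.choose h) ⊆ A (sq (Classical.choose h) + N₀) := hBA _
        rwa [hcj] at h1
      · simp only [hℱdef, dif_neg h]
        exact Set.empty_subset _
    have hℱfin : ∀ n, (ℱ n).Finite := by
      intro n
      by_cases h : ∃ j, sq j + N₀ = n
      · simp only [hℱdef, dif_pos h]; exact hBfin _
      · simp only [hℱdef, dif_neg h]; exact Set.finite_empty
    have hCeq : (⋃ n, ℱ n) = ⋃ j, B j := by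
      apply Set.eq_of_subset_of_subset
      · intro x hx
        obtain ⟨n, hn⟩ := Set.mem_iUnion.mp hx
        by_cases h : ∃ j, sq j + N₀ = n
        · simp only [hℱdef, dif_pos h] at hn
          exact Set.mem_iUnion.mpr ⟨_, hn⟩
        · simp only [hℱdef, dif_neg h] at hn
          exact absurd hn (Set.notMem_empty x)
      · intro x hx
        obtain ⟨j, hj⟩ := Set.mem_iUnion.mp hx
        exact Set.mem_iUnion.mpr ⟨sq j + N₀, by rw [hℱsq j]; exact hj⟩
    set T : Set (Ck X) := ⋃ j, B j with hTdef
    have hT0 : zeroCk X ∉ T := by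
      intro h0
      obtain ⟨j, hj⟩ := Set.mem_iUnion.mp h0
      exact hA0 _ (hBA j hj)
    set φ : Ck X → ℕ := fun f => if h : ∃ j, f ∈ B j then Nat.find h else 0 with hφdef
    have hφmem : ∀ f, f ∈ T → f ∈ B (φ f) := by
      intro f hf
      obtain ⟨j, hj⟩ := Set.mem_iUnion.mp hf
      have hex : ∃ j', f ∈ B j' := ⟨j, hj⟩
      simp only [hφdef, dif_pos hex]
      exact Nat.find_spec hex
    have hφval : ∀ j, ∀ V, V ∈ G (sq j) → φ (pk j V) = j := by
      intro j V hV
      have hmem : pk j V ∈ B j := ⟨V, hV, rfl⟩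
      have hex : ∃ j', pk j V ∈ B j' := ⟨j, hmem⟩
      simp only [hφdef, dif_pos hex]
      have hle : Nat.find hex ≤ j := Nat.find_le hmem
      rcases Nat.lt_or_ge (Nat.find hex) j with h | h
      · exfalso
        have hmem' : pk j V ∈ B (Nat.find hex) := Nat.find_spec hex
        have hforb : pk j V ∈ Forb j := by
          have hc := hBCnd (Nat.find hex) _ hmem'
          simp only [hForbdef]
          rw [Finset.mem_biUnion]
          exact ⟨Nat.find hex, Finset.mem_range.mpr h, hc⟩
        exact (hpk j V hV).2 hforb
      · omega
    have hwitJ : ∀ J : Set ℕ, (∀ M : ℕ, ∃ j ∈ J, M ≤ j) →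
        {x ∈ T | φ x ∈ J} ∈ OmegaPt (Ck X) (zeroCk X) := by
      intro J hJub
      constructor
      · rw [zero_mem_closure_iff]
        intro K hK δ hδ
        set K' : Set X := insert (Classical.arbitrary X) K with hK'def
        have hK'c : IsCompact K' := hK.insert _
        have hK'ne : K'.Nonempty := Set.insert_nonempty _ _
        obtain ⟨M, hM⟩ := hev K' hK'c hK'ne
        obtain ⟨Nδ, hNδ⟩ := exists_nat_gt (1 / δ)
        obtain ⟨j, hjJ, hjM⟩ := hJub (max M Nδ)
        have hj1 : M ≤ j := le_trans (le_max_left _ _) hjM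
        have hj2 : Nδ ≤ j := le_trans (le_max_right _ _) hjM
        obtain ⟨V, hV, hKV⟩ := hM (sq j) (le_trans hj1 (hsqge j))
        refine ⟨pk j V, ⟨Set.mem_iUnion.mpr ⟨j, ⟨V, hV, rfl⟩⟩, ?_⟩, ?_⟩
        · rw [hφval j V hV]
          exact hjJ
        · intro x hx
          have hxV : x ∈ V := hKV (Set.mem_insert_of_mem _ hx)
          have hsm := hBsmall j V hV x hxV
          have hsm' : |(pk j V).1 x| < 1 / (((sq j + N₀ : ℕ) : ℝ) + 1) := hsm
          have hle : (Nδ : ℝ) ≤ ((sq j + N₀ : ℕ) : ℝ) := by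
            have h7 : Nδ ≤ sq j + N₀ := le_trans hj2 (le_trans (hsqge j) (by omega))
            exact_mod_cast h7
          have h5 : 1 / ((Nδ : ℝ) + 1) < δ := by
            rw [div_lt_iff₀ (by positivity : (0:ℝ) < (Nδ : ℝ) + 1)]
            have h6 := (div_lt_iff₀ hδ).mp (lt_trans hNδ (lt_add_one _))
            linarith
          calc |(pk j V).1 x| < 1 / (((sq j + N₀ : ℕ) : ℝ) + 1) := hsm'
            _ ≤ 1 / ((Nδ : ℝ) + 1) := by
                apply one_div_le_one_div_of_le (by positivity)
                linarith
            _ < δ := h5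
      · intro hmem
        exact hT0 hmem.1
    refine ⟨ℱ, fun n => ⟨hℱsub n, hℱfin n⟩, ?_⟩
    rw [hCeq]
    refine ⟨?_, φ, ?_, ?_⟩
    · have h1 := hwitJ Set.univ (fun M => ⟨M, Set.mem_univ M, le_rfl⟩)
      have h2 : {x ∈ T | φ x ∈ Set.univ} = T := by
        ext x; simp
      rwa [h2] at h1
    · intro n
      have hsub : {x ∈ T | φ x = n} ⊆ B n := by
        rintro x ⟨hx, hφx⟩
        have := hφmem x hx
        rwa [hφx] at this
      exact Set.Finite.subset (hBfin n) hsub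
    · intro J hJ
      exact hwitJ J (fun M => by
        obtain ⟨k, hk, hlt⟩ := hJ.exists_gt M
        exact ⟨k, hk, le_of_lt hlt⟩)
end S16

namespace S16

open Classical

variable {X : Type u} [TopologicalSpace X]

omit [TopologicalSpace X] in
lemma finite_le_fibers' {α : Type u} {C : Set α} {φ : α → ℕ}
    (hfib : ∀ n : ℕ, {x ∈ C | φ x = n}.Finite) (z : ℕ) :
    {x ∈ C | φ x ≤ z}.Finite := by
  induction z with
  | zero =>
    refine (hfib 0).subset ?_
    rintro x ⟨h1, h2⟩
    exact ⟨h1, Nat.le_zero.mp h2⟩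
  | succ z ih =>
    refine (ih.union (hfib (z + 1))).subset ?_
    rintro x ⟨h1, h2⟩
    rcases Nat.lt_or_ge (φ x) (z + 1) with h | h
    · exact Or.inl ⟨h1, by omega⟩
    · exact Or.inr ⟨h1, by omega⟩

theorem four_to_KH [Nonempty X] [CompletelyRegularSpace X]
    (h4 : Sfin (OmegaPt (Ck X) (zeroCk X)) (groupables (OmegaPt (Ck X) (zeroCk X)))) :
    KH X := by
  intro 𝒰 h𝒰
  set A : ℕ → Set (Ck X) := fun n =>
    {f | ∃ m : ℕ, n ≤ m ∧ ∃ W : ℕ → Set X, (∀ i ≤ m, W i ∈ 𝒰 i) ∧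
      (∃ K : Set X, IsCompact K ∧ K.Nonempty ∧
        K ⊆ (⋂ i ∈ Finset.range (m + 1), W i) ∧ (∀ x ∈ K, f.1 x = 0)) ∧
      (∀ x ∉ (⋂ i ∈ Finset.range (m + 1), W i), f.1 x = 1)} with hAdef
  have hAmem : ∀ n, A n ∈ OmegaPt (Ck X) (zeroCk X) := by
    intro n
    constructor
    · rw [zero_mem_closure_iff]
      intro K hK δ hδ
      set K' : Set X := insert (Classical.arbitrary X) K with hK'def
      have hK'c : IsCompact K' := hK.insert _
      have hK'ne : K'.Nonempty := Set.insert_nonempty _ _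
      choose W hW1 hW2 using fun i => kcovers_wit (h𝒰 i) K' hK'c hK'ne
      set V : Set X := ⋂ i ∈ Finset.range (n + 1), W i with hVdef
      have hVopen : IsOpen V :=
        isOpen_biInter_finset (fun i _ => (kcovers_leg (h𝒰 i) _ (hW1 i)).1)
      have hK'V : K' ⊆ V := fun x hx => Set.mem_iInter₂.mpr (fun i _ => hW2 i hx)
      obtain ⟨f₀, hf₀c, hf₀0, hf₀1, hf₀I⟩ := urysohn_compact hK'c hVopen hK'V
      refine ⟨⟨f₀, hf₀c⟩, ?_, ?_⟩
      · exact ⟨n, le_rfl, W, fun i _ => hW1 i, ⟨K', hK'c, hK'ne, hK'V, hf₀0⟩, hf₀1⟩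
      · intro x hx
        have h0 : f₀ x = 0 := hf₀0 x (Set.mem_insert_of_mem _ hx)
        show |f₀ x| < δ
        rw [h0, abs_zero]
        exact hδ
    · rintro ⟨m, _, W, hW, _, h1⟩
      have hproper : W 0 ≠ Set.univ := (kcovers_leg (h𝒰 0) _ (hW 0 (Nat.zero_le m))).2.2
      obtain ⟨x, hx⟩ := exists_notMem_of_ne_univ hproper
      have hxV : x ∉ ⋂ i ∈ Finset.range (m + 1), W i := by
        intro hmem
        exact hx (Set.mem_iInter₂.mp hmem 0 (Finset.mem_range.mpr (Nat.succ_pos m)))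
      have := h1 x hxV
      simp only [zeroCk] at this
      norm_num at this
  obtain ⟨B, hB, hTgp⟩ := h4 A hAmem
  obtain ⟨hTΩ, φ, hfib, hJ⟩ := hTgp
  set T : Set (Ck X) := ⋃ n, B n with hTdef
  set st : Ck X → ℕ := fun f => if h : ∃ n, f ∈ B n then Nat.find h else 0 with hstdef
  have hstmem : ∀ f, f ∈ T → f ∈ B (st f) := by
    intro f hf
    obtain ⟨n, hn⟩ := Set.mem_iUnion.mp hf
    have hex : ∃ n', f ∈ B n' := ⟨n, hn⟩
    simp only [hstdef, dif_pos hex]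
    exact Nat.find_spec hex
  have hTA : ∀ f, f ∈ T → f ∈ A (st f) := fun f hf => (hB (st f)).1 (hstmem f hf)
  have hdata : ∀ f : Ck X, ∃ (m : ℕ) (W : ℕ → Set X), f ∈ T →
      (st f ≤ m ∧ (∀ i ≤ m, W i ∈ 𝒰 i) ∧
        (∀ x ∉ (⋂ i ∈ Finset.range (m + 1), W i), f.1 x = 1)) := by
    intro f
    by_cases hf : f ∈ T
    · obtain ⟨m, hm, W, hW, _, h1⟩ := hTA f hf
      exact ⟨m, W, fun _ => ⟨hm, hW, h1⟩⟩
    · exact ⟨0, fun _ => ∅, fun h => absurd h hf⟩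
  choose mm WW hmm using hdata
  have hcont : ∀ f, f ∈ T → ∀ K : Set X, (∀ x ∈ K, |f.1 x| < 1) →
      ∀ i ≤ mm f, K ⊆ WW f i := by
    intro f hf K hsmall i hi x hx
    have hmem : x ∈ ⋂ i ∈ Finset.range (mm f + 1), WW f i := by
      by_contra hc
      have h1 := (hmm f hf).2.2 x hc
      have h2 := hsmall x hx
      rw [h1] at h2
      norm_num at h2
    exact Set.mem_iInter₂.mp hmem i (Finset.mem_range.mpr (Nat.lt_succ_of_le hi))
  have hE : ∀ K : Set X, IsCompact K → K.Nonempty → ∃ j₀ : ℕ, ∀ j ≥ j₀,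
      ∃ f, f ∈ T ∧ φ f = j ∧ ∀ x ∈ K, |f.1 x| < 1 := by
    intro K hK hKne
    set Bad := {j : ℕ | ¬ ∃ f, f ∈ T ∧ φ f = j ∧ ∀ x ∈ K, |f.1 x| < 1} with hBaddef
    have hBadFin : Bad.Finite := by
      by_contra hinf
      have hinf' : Bad.Infinite := hinf
      have hmem := hJ Bad hinf'
      obtain ⟨f, hfm, hfsmall⟩ := zero_mem_closure_iff.mp hmem.1 K hK 1 one_pos
      refine hfm.2 ⟨f, hfm.1, rfl, fun x hx => ?_⟩
      have := hfsmall x hx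
      simpa using this
    obtain ⟨b, hb⟩ := hBadFin.bddAbove
    refine ⟨b + 1, fun j hj => ?_⟩
    by_contra hc
    have hjB : j ∈ Bad := hc
    have := hb hjB
    omega
  have hBfin : ∀ j : ℕ, (⋃ n ∈ Finset.range j, B n).Finite :=
    fun j => Set.Finite.biUnion (Finset.range j).finite_toSet (fun n _ => (hB n).2)
  set dd : ℕ → ℕ := fun j => (hBfin j).toFinset.card with hdddef
  set z : ℕ → ℕ := fun j => dd j + j with hzdef
  set F : ℕ → Set (Set X) := fun j =>
    (fun f => WW f j) '' {f | f ∈ T ∧ j ≤ mm f ∧ φ f ≤ z j} with hFdef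
  have hFsub : ∀ j, F j ⊆ 𝒰 j := by
    rintro j U ⟨f, ⟨hfT, hjm, _⟩, rfl⟩
    exact (hmm f hfT).2.1 j hjm
  have hFfin : ∀ j, (F j).Finite := by
    intro j
    apply Set.Finite.image
    refine (finite_le_fibers' hfib (z j)).subset ?_
    rintro f ⟨h1, _, h3⟩
    exact ⟨h1, h3⟩
  refine ⟨F, fun j => ⟨hFsub j, hFfin j⟩, ?_⟩
  intro K hK hKne
  obtain ⟨j₀, hj₀⟩ := hE K hK hKne
  refine ⟨j₀, fun j hj => ?_⟩
  have hmain : ∃ f, f ∈ T ∧ (∀ x ∈ K, |f.1 x| < 1) ∧ j ≤ mm f ∧ φ f ≤ z j := by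
    by_contra hc
    push_neg at hc
    have hwitfun : ∀ j' : ℕ, ∃ f : Ck X, j₀ ≤ j' →
        (f ∈ T ∧ φ f = j' ∧ ∀ x ∈ K, |f.1 x| < 1) := by
      intro j'
      by_cases hj' : j₀ ≤ j'
      · obtain ⟨f, h1, h2, h3⟩ := hj₀ j' hj'
        exact ⟨f, fun _ => ⟨h1, h2, h3⟩⟩
      · exact ⟨zeroCk X, fun h => absurd h hj'⟩
    choose fw hfw using hwitfun
    have hfwst : ∀ j', j₀ ≤ j' → j' ≤ z j → mm (fw j') < j := by
      intro j' h1 _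
      obtain ⟨hT', hφ', hsm'⟩ := hfw j' h1
      by_contra hge
      push_neg at hge
      have := hc (fw j') hT' hsm' hge
      omega
    have hcard : (Finset.Icc j₀ (z j)).card ≤ (hBfin j).toFinset.card := by
      apply Finset.card_le_card_of_injOn fw
      · intro j' hj'
        rw [Finset.mem_coe, Finset.mem_Icc] at hj'
        rw [Finset.mem_coe, Set.Finite.mem_toFinset]
        have h1 := (hfw j' hj'.1).1
        have hlt := hfwst j' hj'.1 hj'.2
        have hstlt : st (fw j') < j := by
          have := (hmm (fw j') h1).1
          omega
        exact Set.mem_biUnion (Finset.mem_coe.mpr (Finset.mem_range.mpr hstlt))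
          (hstmem _ h1)
      · intro a ha b hb hab
        rw [Finset.mem_coe, Finset.mem_Icc] at ha hb
        have hφab : φ (fw a) = φ (fw b) := by rw [hab]
        rw [(hfw a ha.1).2.1, (hfw b hb.1).2.1] at hφab
        exact hφab
    rw [Nat.card_Icc] at hcard
    have hzj : z j = dd j + j := rfl
    have hdj : (hBfin j).toFinset.card = dd j := rfl
    omega
  obtain ⟨f, hfT, hsm, hjm, hφz⟩ := hmain
  refine ⟨WW f j, ⟨f, ⟨hfT, hjm, hφz⟩, rfl⟩, ?_⟩
  exact hcont f hfT K hsm j hjm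

end S16

theorem statement16 {X : Type u} [TopologicalSpace X] [T2Space X] [CompletelyRegularSpace X]
    (hX : ¬ CompactSpace X) :
    List.TFAE
      [Sfin (KCovers X) (groupables (KCovers X)),
       ¬ OneWinsGfin (KCovers X) (groupables (KCovers X)),
       Reznichenko (Ck X) ∧ CountableFanTightness (Ck X),
       Sfin (OmegaPt (Ck X) (zeroCk X)) (groupables (OmegaPt (Ck X) (zeroCk X)))] := by
  haveI hne : Nonempty X := by
    by_contra h
    rw [not_nonempty_iff] at h
    exact hX ⟨by rw [Set.univ_eq_empty_iff.mpr h]; exact isCompact_empty⟩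
  tfae_have 1 → 2 := S16.sfin_to_not_onewins
  tfae_have 2 → 1 := S16.not_onewins_to_sfin
  tfae_have 1 → 4 := S16.one_to_four
  tfae_have 4 → 3 := S16.four_to_three
  tfae_have 3 → 4 := S16.three_to_four
  tfae_have 4 → 1 := fun h4 => S16.KH_to_sfin (S16.four_to_KH h4)
  tfae_finish
end
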